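/- arXiv:2006.01305 — 6 statements merged into one kernel-verified Lean document; each statement's English description precedes it below -/
import Mathlib

section
/- Let k ≥ 1 be an integer and define I: (−1,1) → ℝ by I(h) = −k h^{2k−1} (1 + 2k − h^{2k}) / ((1+k)(h^{2k} − 1)³). Then I is strictly increasing on (−1,1); in particular I'(h) = −(k h^{2k−2} / ((k+1)(h^{2k} − 1)⁴)) · [(−2k − 8k² − 2) h^{2k} + (2k+1) h^{4k} + 1 − 4k²] and I'(h) > 0 for every h ∈ (−1,1) with h ≠ 0. -/
/-- For `k ≥ 1`, the function
`I h = −k h^(2k−1)(1 + 2k − h^(2k)) / ((1+k)(h^(2k) − 1)³)` is strictly increasing on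
`(−1,1)`; in particular its derivative is given by the displayed formula and is positive
at every `h ∈ (−1,1)` with `h ≠ 0`. -/
theorem stmt_1 (k : ℕ) (hk : 1 ≤ k)
    (I : ℝ → ℝ)
    (hI : I = fun h : ℝ =>
      -(k : ℝ) * h ^ (2 * k - 1) * (1 + 2 * (k : ℝ) - h ^ (2 * k))
        / ((1 + (k : ℝ)) * (h ^ (2 * k) - 1) ^ 3)) :
    StrictMonoOn I (Set.Ioo (-1 : ℝ) 1) ∧
    ∀ h ∈ Set.Ioo (-1 : ℝ) 1,
      deriv I h =
        -((k : ℝ) * h ^ (2 * k - 2) / (((k : ℝ) + 1) * (h ^ (2 * k) - 1) ^ 4)) *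
          ((-2 * (k : ℝ) - 8 * (k : ℝ) ^ 2 - 2) * h ^ (2 * k)
            + (2 * (k : ℝ) + 1) * h ^ (4 * k) + 1 - 4 * (k : ℝ) ^ 2) ∧
      (h ≠ 0 → 0 < deriv I h) := by
  obtain ⟨n, rfl⟩ : ∃ n, k = n + 1 := ⟨k - 1, by omega⟩
  set c : ℝ := (n : ℝ) + 1 with hc
  have hc0 : 0 < c := by positivity
  -- rewrite I in a subtraction-free form
  have hIfun : I = fun h : ℝ =>
      (-c * h ^ (2 * n + 1)) * ((1 + 2 * c) - h ^ (2 * n + 2))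
        / ((1 + c) * (h ^ (2 * n + 2) - 1) ^ 3) := by
    rw [hI]
    funext h
    have e1 : 2 * (n + 1) - 1 = 2 * n + 1 := by omega
    have e2 : 2 * (n + 1) = 2 * n + 2 := by omega
    rw [e1, e2]
    push_cast
    ring
  clear hI
  -- explicit derivative (target form)
  set T : ℝ → ℝ := fun h =>
    -(c * h ^ (2 * n) / ((c + 1) * (h ^ (2 * n + 2) - 1) ^ 4)) *
      ((-2 * c - 8 * c ^ 2 - 2) * h ^ (2 * n + 2)
        + (2 * c + 1) * h ^ (4 * n + 4) + 1 - 4 * c ^ 2) with hT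
  have key : ∀ h ∈ Set.Ioo (-1 : ℝ) 1, HasDerivAt I (T h) h := by
    intro h hh
    have habs : |h| < 1 := abs_lt.2 ⟨hh.1, hh.2⟩
    have hlt : h ^ (2 * n + 2) < 1 := by
      calc h ^ (2 * n + 2) ≤ |h ^ (2 * n + 2)| := le_abs_self _
        _ = |h| ^ (2 * n + 2) := by rw [abs_pow]
        _ < 1 := pow_lt_one₀ (abs_nonneg _) habs (by omega)
    have hne : h ^ (2 * n + 2) - 1 ≠ 0 := sub_ne_zero.2 (ne_of_lt hlt)
    have hden : (1 + c) * (h ^ (2 * n + 2) - 1) ^ 3 ≠ 0 := by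
      apply mul_ne_zero (by positivity) (pow_ne_zero _ hne)
    have hN : HasDerivAt
        (fun x : ℝ => (-c * x ^ (2 * n + 1)) * ((1 + 2 * c) - x ^ (2 * n + 2)))
        ((-c * ((2 * n + 1 : ℕ) * h ^ (2 * n))) * ((1 + 2 * c) - h ^ (2 * n + 2))
          + (-c * h ^ (2 * n + 1)) * (-((2 * n + 2 : ℕ) * h ^ (2 * n + 1)))) h := by
      have p1 := (hasDerivAt_pow (2 * n + 1) h).const_mul (-c)
      have p2 := ((hasDerivAt_pow (2 * n + 2) h).const_sub (1 + 2 * c))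
      simp only [show 2 * n + 1 - 1 = 2 * n from by omega,
        show 2 * n + 2 - 1 = 2 * n + 1 from by omega] at p1 p2
      exact (p1.mul p2).congr_deriv (by ring)
    have hD : HasDerivAt
        (fun x : ℝ => (1 + c) * (x ^ (2 * n + 2) - 1) ^ 3)
        ((1 + c) * (3 * (h ^ (2 * n + 2) - 1) ^ 2 * ((2 * n + 2 : ℕ) * h ^ (2 * n + 1)))) h := by
      have p := ((hasDerivAt_pow (2 * n + 2) h).sub_const 1).pow 3
      simp only [show 2 * n + 2 - 1 = 2 * n + 1 from by omega,
        show 3 - 1 = 2 from rfl] at p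
      exact p.const_mul (1 + c)
    have hdiv := hN.div hD hden
    rw [hIfun]
    refine hdiv.congr_deriv ?_
    rw [hT]
    push_cast
    field_simp
    ring
  have hderiv : ∀ h ∈ Set.Ioo (-1 : ℝ) 1, deriv I h = T h :=
    fun h hh => (key h hh).deriv
  -- positivity of the derivative away from 0
  have hpos : ∀ h ∈ Set.Ioo (-1 : ℝ) 1, h ≠ 0 → 0 < deriv I h := by
    intro h hh hne0
    rw [hderiv h hh]
    have habs : |h| < 1 := abs_lt.2 ⟨hh.1, hh.2⟩
    have hlt : h ^ (2 * n + 2) < 1 := by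
      calc h ^ (2 * n + 2) ≤ |h ^ (2 * n + 2)| := le_abs_self _
        _ = |h| ^ (2 * n + 2) := by rw [abs_pow]
        _ < 1 := pow_lt_one₀ (abs_nonneg _) habs (by omega)
    have hx0 : 0 ≤ h ^ (2 * n + 2) := by
      have : h ^ (2 * n + 2) = (h ^ (n + 1)) ^ 2 := by ring
      rw [this]; positivity
    have h2n : 0 < h ^ (2 * n) := by
      have : h ^ (2 * n) = (h ^ 2) ^ n := by ring
      rw [this]
      exact pow_pos (by positivity) n
    have hne : h ^ (2 * n + 2) - 1 ≠ 0 := sub_ne_zero.2 (ne_of_lt hlt)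
    have h4 : h ^ (4 * n + 4) = (h ^ (2 * n + 2)) ^ 2 := by ring
    rw [hT]
    have hA : 0 < c * h ^ (2 * n) / ((c + 1) * (h ^ (2 * n + 2) - 1) ^ 4) := by
      apply div_pos (by positivity)
      have : 0 < (h ^ (2 * n + 2) - 1) ^ 4 := by positivity
      positivity
    have hB : (-2 * c - 8 * c ^ 2 - 2) * h ^ (2 * n + 2)
        + (2 * c + 1) * h ^ (4 * n + 4) + 1 - 4 * c ^ 2 < 0 := by
      rw [h4]
      set x := h ^ (2 * n + 2)
      have hc1 : (1 : ℝ) ≤ c := by rw [hc]; push_cast; linarith [Nat.cast_nonneg (α := ℝ) n]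
      nlinarith [mul_nonneg hx0 (sub_nonneg.2 hlt.le), sq_nonneg c, mul_pos hc0 hc0]
    have := mul_pos_of_neg_of_neg (neg_neg_iff_pos.mpr hA) hB
    nlinarith [this]
  have hmono : StrictMonoOn I (Set.Ioo (-1 : ℝ) 1) := by
    have hdiffOn : ∀ x ∈ Set.Ioo (-1 : ℝ) 1, DifferentiableAt ℝ I x :=
      fun x hx => (key x hx).differentiableAt
    have m1 : StrictMonoOn I (Set.Ioc (-1 : ℝ) 0) := by
      apply strictMonoOn_of_deriv_pos (convex_Ioc _ _)
      · intro x hx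
        exact (hdiffOn x ⟨hx.1, lt_of_le_of_lt hx.2 one_pos⟩).continuousAt.continuousWithinAt
      · rw [interior_Ioc]
        intro x hx
        exact hpos x ⟨hx.1, hx.2.trans one_pos⟩ hx.2.ne
    have m2 : StrictMonoOn I (Set.Ico (0 : ℝ) 1) := by
      apply strictMonoOn_of_deriv_pos (convex_Ico _ _)
      · intro x hx
        exact (hdiffOn x ⟨lt_of_lt_of_le (by norm_num) hx.1, hx.2⟩).continuousAt.continuousWithinAt
      · rw [interior_Ico]
        intro x hx
        exact hpos x ⟨(by norm_num : (-1:ℝ) < 0).trans hx.1, hx.2⟩ hx.1.ne'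
    intro a ha b hb hab
    rcases le_or_gt b 0 with hb0 | hb0
    · exact m1 ⟨ha.1, (hab.trans_le hb0).le⟩ ⟨hb.1, hb0⟩ hab
    · rcases le_or_gt 0 a with ha0 | ha0
      · exact m2 ⟨ha0, ha.2⟩ ⟨ha0.trans hab.le, hb.2⟩ hab
      · calc I a < I 0 := m1 ⟨ha.1, ha0.le⟩ ⟨by norm_num, le_refl 0⟩ ha0
          _ < I b := m2 ⟨le_refl 0, by norm_num⟩ ⟨hb0.le, hb.2⟩ hb0
  refine ⟨hmono, fun h hh => ⟨?_, hpos h hh⟩⟩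
  rw [hderiv h hh, hT]
  have e1 : 2 * (n + 1) - 2 = 2 * n := by omega
  have e2 : 2 * (n + 1) = 2 * n + 2 := by omega
  have e3 : 4 * (n + 1) = 4 * n + 4 := by omega
  rw [e1, e2, e3]
  push_cast
  ring
end

section
/- Fix an integer k ≥ 1 and ω > 0, set B_ω = k/(2ω(k+1)), and for B ∈ (0, B_ω) let b(B) ∈ (0,1) be the unique root in (0,1) of x²/(2ω) − x^{2k+2}/((2k+2)ω) = B. Define the period map L: (0, B_ω) → ℝ by L(B) = 2 ∫_{−b(B)}^{b(B)} (2B − h²/ω + h^{2k+2}/((k+1)ω))^{−1/2} dh. Then L is differentiable and L'(B) > 0 for every B ∈ (0, B_ω); in particular L is strictly increasing. -/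
open MeasureTheory Set

noncomputable def myc (k : ℕ) (s : ℝ) : ℝ := (1 - s ^ (2 * k + 2)) / ((k : ℝ) + 1)

noncomputable def myG (k : ℕ) (t : ℝ) : ℝ :=
  ∫ s in (-1 : ℝ)..1, (Real.sqrt ((1 - s ^ 2) - t * myc k s))⁻¹

lemma myc_nonneg (k : ℕ) {s : ℝ} (hs : s ∈ Set.Icc (-1:ℝ) 1) : 0 ≤ myc k s := by
  have h1 : s ^ 2 ≤ 1 := by nlinarith [hs.1, hs.2]
  have h2 : s ^ (2 * k + 2) ≤ 1 := by
    have h3 : s ^ (2 * k + 2) = (s ^ 2) ^ (k + 1) := by ring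
    rw [h3]
    exact pow_le_one₀ (sq_nonneg s) h1
  have hk : (0:ℝ) < (k:ℝ) + 1 := by positivity
  exact div_nonneg (by linarith) hk.le

lemma myc_le (k : ℕ) {s : ℝ} (hs : s ∈ Set.Icc (-1:ℝ) 1) : myc k s ≤ 1 - s ^ 2 := by
  have hk : (0:ℝ) < (k:ℝ) + 1 := by positivity
  rw [myc, div_le_iff₀ hk]
  have h := one_add_mul_le_pow (a := s ^ 2 - 1) (by nlinarith [sq_nonneg s]) (k + 1)
  have hpow : (1 + (s ^ 2 - 1)) ^ (k + 1) = s ^ (2 * k + 2) := by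
    have h4 : 1 + (s ^ 2 - 1) = s ^ 2 := by ring
    rw [h4, ← pow_mul]
    ring_nf
  rw [hpow] at h
  push_cast at h ⊢
  nlinarith

lemma myc_pos (k : ℕ) {s : ℝ} (hs : s ∈ Set.Ioo (-1:ℝ) 1) : 0 < myc k s := by
  have h1 : s ^ 2 < 1 := by nlinarith [hs.1, hs.2]
  have h2 : s ^ (2 * k + 2) < 1 := by
    have h3 : s ^ (2 * k + 2) = (s ^ 2) ^ (k + 1) := by ring
    rw [h3]
    exact pow_lt_one₀ (sq_nonneg s) h1 (Nat.succ_ne_zero k)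
  have hk : (0:ℝ) < (k:ℝ) + 1 := by positivity
  exact div_pos (by linarith) hk

lemma integrable_inv_sqrt_one_sub_sq :
    IntervalIntegrable (fun s : ℝ => (Real.sqrt (1 - s ^ 2))⁻¹) volume (-1) 1 := by
  have h := intervalIntegral.intervalIntegrable_deriv_of_nonneg (g := Real.arcsin)
    (g' := fun s : ℝ => (Real.sqrt (1 - s ^ 2))⁻¹) (a := -1) (b := 1)
    (Real.continuous_arcsin.continuousOn)
    (fun x hx => by
      rw [show min (-1:ℝ) 1 = -1 by norm_num, show max (-1:ℝ) 1 = 1 by norm_num] at hx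
      simpa [one_div] using Real.hasDerivAt_arcsin hx.1.ne' hx.2.ne)
    (fun x _ => by positivity)
  exact h

lemma aux_eq {A u : ℝ} (hA : 0 < A) (hu : 0 < u) :
    u / (2 * Real.sqrt (A * u) * (A * u)) = (2 * A * Real.sqrt A)⁻¹ * (Real.sqrt u)⁻¹ := by
  rw [Real.sqrt_mul hA.le]
  have h1 : 0 < Real.sqrt A := Real.sqrt_pos.mpr hA
  have h2 : 0 < Real.sqrt u := Real.sqrt_pos.mpr hu
  field_simp

lemma myG_hasDeriv (k : ℕ) {t₀ : ℝ} (ht₀ : t₀ ∈ Set.Ioo (0:ℝ) 1) :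
    ∃ d : ℝ, 0 < d ∧ HasDerivAt (myG k) d t₀ := by
  obtain ⟨ht0, ht1⟩ := ht₀
  set tm : ℝ := (1 + t₀) / 2 with htm
  have htm1 : tm < 1 := by rw [htm]; linarith
  have htm0 : 0 < tm := by rw [htm]; linarith
  have htmt : t₀ < tm := by rw [htm]; linarith
  set ε : ℝ := (1 - t₀) / 2 with hε
  have hε_pos : 0 < ε := by rw [hε]; linarith
  have hball : ∀ t ∈ Metric.ball t₀ ε, t ≤ tm := by
    intro t ht
    rw [Metric.mem_ball, Real.dist_eq, abs_lt] at ht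
    rw [htm]; rw [hε] at ht; linarith [ht.2]
  -- lower bound for the inner function
  have hub : ∀ s ∈ Set.Ioc (-1:ℝ) 1, ∀ t ≤ tm,
      (1 - tm) * (1 - s ^ 2) ≤ (1 - s ^ 2) - t * myc k s := by
    intro s hs t ht
    have hsI : s ∈ Set.Icc (-1:ℝ) 1 := ⟨hs.1.le, hs.2⟩
    have hc0 := myc_nonneg k hsI
    have hc1 := myc_le k hsI
    nlinarith [mul_le_mul_of_nonneg_right ht hc0, mul_le_mul_of_nonneg_left hc1 htm0.le]
  have hupos : ∀ s ∈ Set.Ioo (-1:ℝ) 1, ∀ t ≤ tm,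
      0 < (1 - s ^ 2) - t * myc k s := by
    intro s hs t ht
    have hs2 : 0 < 1 - s ^ 2 := by nlinarith [hs.1, hs.2]
    have := hub s ⟨hs.1, hs.2.le⟩ t ht
    nlinarith
  -- continuity / measurability
  have hmc : Continuous (myc k) := by
    unfold myc; fun_prop
  have hinner : ∀ t : ℝ, Continuous (fun s : ℝ => (1 - s ^ 2) - t * myc k s) := by
    intro t
    exact (continuous_const.sub (continuous_pow 2)).sub (continuous_const.mul hmc)
  have hFmeas : ∀ t : ℝ, AEStronglyMeasurable
      (fun s : ℝ => (Real.sqrt ((1 - s ^ 2) - t * myc k s))⁻¹)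
      (volume.restrict (Set.uIoc (-1:ℝ) 1)) := by
    intro t
    exact ((Real.continuous_sqrt.comp (hinner t)).measurable.inv).aestronglyMeasurable
  have hF'meas : AEStronglyMeasurable
      (fun s : ℝ => myc k s / (2 * Real.sqrt ((1 - s ^ 2) - t₀ * myc k s))
        / ((1 - s ^ 2) - t₀ * myc k s))
      (volume.restrict (Set.uIoc (-1:ℝ) 1)) := by
    exact ((hmc.measurable.div
      ((continuous_const.mul (Real.continuous_sqrt.comp (hinner t₀))).measurable)).div
      (hinner t₀).measurable).aestronglyMeasurable
  have hIoc : Set.uIoc (-1:ℝ) 1 = Set.Ioc (-1:ℝ) 1 := Set.uIoc_of_le (by norm_num)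
  have hae : ∀ᵐ s : ℝ, s ≠ 1 := by
    have h1 : {s : ℝ | ¬ s ≠ 1} = {1} := by ext x; simp
    rw [MeasureTheory.ae_iff, h1]
    exact measure_singleton 1
  -- integrability of F t₀
  have hFint : IntervalIntegrable
      (fun s : ℝ => (Real.sqrt ((1 - s ^ 2) - t₀ * myc k s))⁻¹) volume (-1) 1 := by
    apply IntervalIntegrable.mono_fun'
      (g := fun s : ℝ => (Real.sqrt (1 - tm))⁻¹ * (Real.sqrt (1 - s ^ 2))⁻¹)
      (integrable_inv_sqrt_one_sub_sq.const_mul _) (hFmeas t₀)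
    rw [hIoc]
    refine MeasureTheory.ae_restrict_of_forall_mem measurableSet_Ioc ?_
    intro s hs
    rcases eq_or_lt_of_le hs.2 with h1 | h1
    · subst h1
      have hc1 : myc k (1:ℝ) = 0 := by
        unfold myc; norm_num
      have h12 : 1 - (1:ℝ) ^ 2 = 0 := by ring
      simp [hc1, h12]
    · have hsO : s ∈ Set.Ioo (-1:ℝ) 1 := ⟨hs.1, h1⟩
      have hu := hupos s hsO t₀ htmt.le
      have hm : (0:ℝ) < (1 - tm) * (1 - s ^ 2) := by
        have : 0 < 1 - s ^ 2 := by nlinarith [hsO.1, hsO.2]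
        nlinarith
      have hmu := hub s hs t₀ htmt.le
      have h2 : Real.sqrt ((1 - tm) * (1 - s ^ 2)) ≤ Real.sqrt ((1 - s ^ 2) - t₀ * myc k s) :=
        Real.sqrt_le_sqrt hmu
      have h3 : 0 < Real.sqrt ((1 - tm) * (1 - s ^ 2)) := Real.sqrt_pos.mpr hm
      have h4 : (Real.sqrt ((1 - s ^ 2) - t₀ * myc k s))⁻¹
          ≤ (Real.sqrt ((1 - tm) * (1 - s ^ 2)))⁻¹ := by
        exact inv_anti₀ h3 h2
      calc ‖(Real.sqrt ((1 - s ^ 2) - t₀ * myc k s))⁻¹‖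
          = (Real.sqrt ((1 - s ^ 2) - t₀ * myc k s))⁻¹ := by
            rw [Real.norm_eq_abs, abs_of_nonneg (by positivity)]
        _ ≤ (Real.sqrt ((1 - tm) * (1 - s ^ 2)))⁻¹ := h4
        _ = (Real.sqrt (1 - tm))⁻¹ * (Real.sqrt (1 - s ^ 2))⁻¹ := by
            rw [Real.sqrt_mul (by linarith), mul_inv]
  -- bound for the derivative
  set K : ℝ := (2 * (1 - tm) * Real.sqrt (1 - tm))⁻¹ with hK
  have hbound_int : IntervalIntegrable
      (fun s : ℝ => K * (Real.sqrt (1 - s ^ 2))⁻¹) volume (-1) 1 :=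
    integrable_inv_sqrt_one_sub_sq.const_mul _
  have h_bound : ∀ᵐ s : ℝ, s ∈ Set.uIoc (-1:ℝ) 1 → ∀ t ∈ Metric.ball t₀ ε,
      ‖myc k s / (2 * Real.sqrt ((1 - s ^ 2) - t * myc k s))
        / ((1 - s ^ 2) - t * myc k s)‖ ≤ K * (Real.sqrt (1 - s ^ 2))⁻¹ := by
    filter_upwards [hae] with s hs1 hsI t ht
    rw [hIoc] at hsI
    have hsO : s ∈ Set.Ioo (-1:ℝ) 1 := ⟨hsI.1, lt_of_le_of_ne hsI.2 hs1⟩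
    have hsIcc : s ∈ Set.Icc (-1:ℝ) 1 := ⟨hsO.1.le, hsO.2.le⟩
    have htm' : t ≤ tm := hball t ht
    have hs2 : 0 < 1 - s ^ 2 := by nlinarith [hsO.1, hsO.2]
    have hu : 0 < (1 - s ^ 2) - t * myc k s := hupos s hsO t htm'
    have hmu : (1 - tm) * (1 - s ^ 2) ≤ (1 - s ^ 2) - t * myc k s :=
      hub s ⟨hsO.1, hsO.2.le⟩ t htm'
    have hm : (0:ℝ) < (1 - tm) * (1 - s ^ 2) := by nlinarith
    have hc0 := myc_nonneg k hsIcc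
    have hc1 := myc_le k hsIcc
    have hnn : 0 ≤ myc k s / (2 * Real.sqrt ((1 - s ^ 2) - t * myc k s))
        / ((1 - s ^ 2) - t * myc k s) := by positivity
    rw [Real.norm_eq_abs, abs_of_nonneg hnn, div_div]
    have hstep : myc k s / (2 * Real.sqrt ((1 - s ^ 2) - t * myc k s)
        * ((1 - s ^ 2) - t * myc k s))
        ≤ (1 - s ^ 2) / (2 * Real.sqrt ((1 - tm) * (1 - s ^ 2)) * ((1 - tm) * (1 - s ^ 2))) := by
      have hden : 0 < 2 * Real.sqrt ((1 - tm) * (1 - s ^ 2)) * ((1 - tm) * (1 - s ^ 2)) := by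
        have := Real.sqrt_pos.mpr hm
        positivity
      gcongr
    refine hstep.trans (le_of_eq ?_)
    rw [hK]
    exact aux_eq (by linarith) hs2
  -- differentiability in t
  have h_diff : ∀ᵐ s : ℝ, s ∈ Set.uIoc (-1:ℝ) 1 → ∀ t ∈ Metric.ball t₀ ε,
      HasDerivAt (fun t => (Real.sqrt ((1 - s ^ 2) - t * myc k s))⁻¹)
        (myc k s / (2 * Real.sqrt ((1 - s ^ 2) - t * myc k s))
          / ((1 - s ^ 2) - t * myc k s)) t := by
    filter_upwards [hae] with s hs1 hsI t ht
    rw [hIoc] at hsI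
    have hsO : s ∈ Set.Ioo (-1:ℝ) 1 := ⟨hsI.1, lt_of_le_of_ne hsI.2 hs1⟩
    have htm' : t ≤ tm := hball t ht
    have hu : 0 < (1 - s ^ 2) - t * myc k s := hupos s hsO t htm'
    have h1 : HasDerivAt (fun t : ℝ => (1 - s ^ 2) - t * myc k s)
        (0 - 1 * myc k s) t :=
      (hasDerivAt_const t (1 - s ^ 2)).sub ((hasDerivAt_id t).mul_const (myc k s))
    have h2 := h1.sqrt hu.ne'
    have hsqrt : 0 < Real.sqrt ((1 - s ^ 2) - t * myc k s) := Real.sqrt_pos.mpr hu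
    have h3 := h2.inv hsqrt.ne'
    refine h3.congr_deriv (Eq.symm ?_)
    rw [Real.sq_sqrt hu.le]
    ring
  have hmain := intervalIntegral.hasDerivAt_integral_of_dominated_loc_of_deriv_le
    (F := fun t s => (Real.sqrt ((1 - s ^ 2) - t * myc k s))⁻¹)
    (F' := fun t s => myc k s / (2 * Real.sqrt ((1 - s ^ 2) - t * myc k s))
      / ((1 - s ^ 2) - t * myc k s))
    (Metric.ball_mem_nhds t₀ hε_pos) (Filter.Eventually.of_forall hFmeas) hFint hF'meas h_bound hbound_int h_diff
  refine ⟨_, ?_, hmain.2⟩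
  apply intervalIntegral.intervalIntegral_pos_of_pos_on hmain.1
  · intro s hsO
    have hu : 0 < (1 - s ^ 2) - t₀ * myc k s := hupos s hsO t₀ htmt.le
    have hcp : 0 < myc k s := myc_pos k hsO
    have hsqrt : 0 < Real.sqrt ((1 - s ^ 2) - t₀ * myc k s) := Real.sqrt_pos.mpr hu
    positivity
  · norm_num

lemma subst_lemma (k : ℕ) {ω : ℝ} (hω : 0 < ω) {B β : ℝ} (hβ : β ∈ Set.Ioo (0:ℝ) 1)
    (hroot : β ^ 2 / (2 * ω) - β ^ (2 * k + 2) / ((2 * (k : ℝ) + 2) * ω) = B) :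
    2 * (∫ h in (-β)..β,
        (Real.sqrt (2 * B - h ^ 2 / ω + h ^ (2 * k + 2) / (((k : ℝ) + 1) * ω)))⁻¹)
      = 2 * Real.sqrt ω * myG k (β ^ (2 * k)) := by
  have hβ0 : (0:ℝ) < β := hβ.1
  have hωne : ω ≠ 0 := hω.ne'
  have hk1 : (0:ℝ) < (k:ℝ) + 1 := by positivity
  have hpt : ∀ s : ℝ,
      (Real.sqrt (2 * B - (β * s) ^ 2 / ω + (β * s) ^ (2 * k + 2) / (((k : ℝ) + 1) * ω)))⁻¹
        = (Real.sqrt ω / β) * (Real.sqrt ((1 - s ^ 2) - β ^ (2 * k) * myc k s))⁻¹ := by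
    intro s
    have hinner : 2 * B - (β * s) ^ 2 / ω + (β * s) ^ (2 * k + 2) / (((k : ℝ) + 1) * ω)
        = (β ^ 2 / ω) * ((1 - s ^ 2) - β ^ (2 * k) * myc k s) := by
      rw [← hroot, myc]
      rw [mul_pow β s (2 * k + 2)]
      field_simp
      ring
    rw [hinner, Real.sqrt_mul (by positivity), mul_inv]
    have hsq : Real.sqrt (β ^ 2 / ω) = β / Real.sqrt ω := by
      rw [Real.sqrt_div (sq_nonneg β), Real.sqrt_sq hβ0.le]
    rw [hsq, inv_div]
  have hsub := intervalIntegral.integral_comp_mul_left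
    (f := fun h => (Real.sqrt (2 * B - h ^ 2 / ω + h ^ (2 * k + 2) / (((k : ℝ) + 1) * ω)))⁻¹)
    (a := (-1:ℝ)) (b := 1) (c := β) hβ0.ne'
  have h3 : (∫ s in (-1:ℝ)..1,
      (Real.sqrt (2 * B - (β * s) ^ 2 / ω + (β * s) ^ (2 * k + 2) / (((k : ℝ) + 1) * ω)))⁻¹)
        = (Real.sqrt ω / β) * myG k (β ^ (2 * k)) := by
    rw [myG, ← intervalIntegral.integral_const_mul]
    exact intervalIntegral.integral_congr (fun s _ => hpt s)
  rw [h3] at hsub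
  rw [show β * (-1:ℝ) = -β by ring, show β * (1:ℝ) = β by ring] at hsub
  beta_reduce at hsub
  have h4 : (∫ h in (-β)..β,
      (Real.sqrt (2 * B - h ^ 2 / ω + h ^ (2 * k + 2) / (((k : ℝ) + 1) * ω)))⁻¹)
        = β * ((Real.sqrt ω / β) * myG k (β ^ (2 * k))) := by
    rw [hsub, smul_eq_mul, ← mul_assoc, mul_inv_cancel₀ hβ0.ne', one_mul]
  rw [h4]
  field_simp

/-- For `k ≥ 1`, `ω > 0`, `B_ω = k/(2ω(k+1))`, letting `b(B) ∈ (0,1)` be the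
unique root of `x²/(2ω) − x^(2k+2)/((2k+2)ω) = B`, the period map
`L(B) = 2 ∫_{−b(B)}^{b(B)} (2B − h²/ω + h^(2k+2)/((k+1)ω))^{−1/2} dh`
is differentiable with `L'(B) > 0` on `(0, B_ω)`; in particular `L` is strictly increasing. -/
theorem stmt_3 (k : ℕ) (hk : 1 ≤ k) (ω : ℝ) (hω : 0 < ω)
    (Bω : ℝ) (hBω : Bω = (k : ℝ) / (2 * ω * ((k : ℝ) + 1)))
    (b : ℝ → ℝ)
    (hb : ∀ B ∈ Set.Ioo (0 : ℝ) Bω, b B ∈ Set.Ioo (0 : ℝ) 1 ∧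
      (b B) ^ 2 / (2 * ω) - (b B) ^ (2 * k + 2) / ((2 * (k : ℝ) + 2) * ω) = B)
    (L : ℝ → ℝ)
    (hL : L = fun B : ℝ => 2 * ∫ h in (-(b B))..(b B),
      (Real.sqrt (2 * B - h ^ 2 / ω + h ^ (2 * k + 2) / (((k : ℝ) + 1) * ω)))⁻¹) :
    (∀ B ∈ Set.Ioo (0 : ℝ) Bω, DifferentiableAt ℝ L B ∧ 0 < deriv L B) ∧
    StrictMonoOn L (Set.Ioo (0 : ℝ) Bω) := by
  have hk1 : (0:ℝ) < (k:ℝ) + 1 := by positivity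
  set φ : ℝ → ℝ := fun x => x ^ 2 / (2 * ω) - x ^ (2 * k + 2) / ((2 * (k:ℝ) + 2) * ω)
    with hφdef
  have hφd : ∀ x : ℝ, HasDerivAt φ ((x - x ^ (2 * k + 1)) / ω) x := by
    intro x
    have h1 := ((hasDerivAt_pow 2 x).div_const (2 * ω)).sub
      ((hasDerivAt_pow (2 * k + 2) x).div_const ((2 * (k:ℝ) + 2) * ω))
    refine h1.congr_deriv (Eq.symm ?_)
    have hne : (2 * (k:ℝ) + 2) ≠ 0 := by positivity
    have he : 2 * k + 2 - 1 = 2 * k + 1 := by omega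
    rw [he]
    push_cast
    field_simp
  have hφpos : ∀ x ∈ Set.Ioo (0:ℝ) 1, 0 < (x - x ^ (2 * k + 1)) / ω := by
    intro x hx
    have h2 : x ^ (2 * k) < 1 := pow_lt_one₀ hx.1.le hx.2 (by omega)
    have h3 : x ^ (2 * k + 1) = x * x ^ (2 * k) := by ring
    apply div_pos _ hω
    rw [h3]
    nlinarith [hx.1]
  have hφc : Continuous φ := by
    rw [hφdef]; fun_prop
  have hφmono : StrictMonoOn φ (Set.Icc 0 1) := by
    apply strictMonoOn_of_deriv_pos (convex_Icc 0 1) hφc.continuousOn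
    intro x hx
    rw [interior_Icc] at hx
    rw [(hφd x).deriv]
    exact hφpos x hx
  have key : ∀ B ∈ Set.Ioo (0:ℝ) Bω, DifferentiableAt ℝ L B ∧ 0 < deriv L B := by
    intro B hB
    have hBmem : Set.Ioo (0:ℝ) Bω ∈ nhds B := Ioo_mem_nhds hB.1 hB.2
    obtain ⟨hβmem, hβroot⟩ := hb B hB
    set β := b B with hβdef
    have hβ0 : 0 < β := hβmem.1
    have hβ1 : β < 1 := hβmem.2
    have hφβ : φ β = B := hβroot
    have hbc : ContinuousAt b B := by
      rw [ContinuousAt, tendsto_order]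
      constructor
      · intro u hu
        rcases lt_or_ge u 0 with hu0 | hu0
        · filter_upwards [hBmem] with B' hB'
          exact hu0.trans (hb B' hB').1.1
        · have hu1 : u < 1 := lt_trans hu hβ1
          have hφu : φ u < B := by
            rw [← hφβ]
            exact hφmono ⟨hu0, hu1.le⟩ ⟨hβ0.le, hβ1.le⟩ hu
          filter_upwards [hBmem, Ioi_mem_nhds hφu] with B' hB' hB2
          by_contra hle
          push_neg at hle
          have hmm : φ (b B') ≤ φ u :=
            hφmono.monotoneOn ⟨(hb B' hB').1.1.le, (hb B' hB').1.2.le⟩ ⟨hu0, hu1.le⟩ hle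
          simp only [hφdef] at hmm
          rw [(hb B' hB').2] at hmm
          exact absurd hB2 (not_lt.mpr hmm)
      · intro v hv
        rcases le_or_gt v 1 with hv1 | hv1
        · have hv0 : 0 < v := lt_trans hβ0 hv
          have hφv : B < φ v := by
            rw [← hφβ]
            exact hφmono ⟨hβ0.le, hβ1.le⟩ ⟨hv0.le, hv1⟩ hv
          filter_upwards [hBmem, Iio_mem_nhds hφv] with B' hB' hB2
          by_contra hle
          push_neg at hle
          have hmm : φ v ≤ φ (b B') :=
            hφmono.monotoneOn ⟨hv0.le, hv1⟩ ⟨(hb B' hB').1.1.le, (hb B' hB').1.2.le⟩ hle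
          simp only [hφdef] at hmm
          rw [(hb B' hB').2] at hmm
          exact absurd hB2 (not_lt.mpr hmm)
        · filter_upwards [hBmem] with B' hB'
          exact lt_trans (hb B' hB').1.2 hv1
    have hbev : ∀ᶠ B' in nhds B, φ (b B') = B' := by
      filter_upwards [hBmem] with B' hB'
      exact (hb B' hB').2
    have hbd : HasDerivAt b ((β - β ^ (2 * k + 1)) / ω)⁻¹ B :=
      HasDerivAt.of_local_left_inverse hbc (hφd β) (ne_of_gt (hφpos β hβmem)) hbev
    have hτ : β ^ (2 * k) ∈ Set.Ioo (0:ℝ) 1 :=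
      ⟨pow_pos hβ0 _, pow_lt_one₀ hβ0.le hβ1 (by omega)⟩
    obtain ⟨d, hd_pos, hdG⟩ := myG_hasDeriv k hτ
    have h1 := hbd.pow (2 * k)
    have h2 := HasDerivAt.comp B hdG h1
    have h3 := h2.const_mul (2 * Real.sqrt ω)
    have heq : L =ᶠ[nhds B] fun B' => 2 * Real.sqrt ω * myG k (b B' ^ (2 * k)) := by
      filter_upwards [hBmem] with B' hB'
      simp only [hL]
      exact subst_lemma k hω (hb B' hB').1 (hb B' hB').2
    have hLd : HasDerivAt L (2 * Real.sqrt ω *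
        (d * (↑(2 * k) * β ^ (2 * k - 1) * ((β - β ^ (2 * k + 1)) / ω)⁻¹))) B :=
      h3.congr_of_eventuallyEq heq
    refine ⟨hLd.differentiableAt, ?_⟩
    rw [hLd.deriv]
    have hsω : 0 < Real.sqrt ω := Real.sqrt_pos.mpr hω
    have hnum : 0 < ((β - β ^ (2 * k + 1)) / ω)⁻¹ := inv_pos.mpr (hφpos β hβmem)
    have h2k : (0:ℝ) < ((2 * k : ℕ) : ℝ) := by
      have : 0 < 2 * k := by omega
      exact_mod_cast this
    have hβp : 0 < β ^ (2 * k - 1) := pow_pos hβ0 _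
    exact mul_pos (mul_pos two_pos hsω)
      (mul_pos hd_pos (mul_pos (mul_pos h2k hβp) hnum))
  refine ⟨key, ?_⟩
  apply strictMonoOn_of_deriv_pos (convex_Ioo 0 Bω)
  · intro x hx
    exact ((key x hx).1.continuousAt).continuousWithinAt
  · intro x hx
    rw [interior_Ioo] at hx
    exact (key x hx).2
end

section
/- Let ω > 0 and define h: ℝ → ℝ by h(x) = √(2/3) · tanh(x/√ω) / √(1 − (1/3) tanh²(x/√ω)). Then h satisfies −ω h''(x) − h(x) + h(x)⁵ = 0 for all x ∈ ℝ, and h(x) → ±1 as x → ±∞. -/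
open Real Filter

private lemma tanh_sq_lt_one (x : ℝ) : Real.tanh x ^ 2 < 1 := by
  have hc := Real.cosh_pos x
  have h1 := Real.cosh_sq_sub_sinh_sq x
  rw [Real.tanh_eq_sinh_div_cosh, div_pow, div_lt_one (by positivity)]
  nlinarith

private lemma hasDerivAt_tanh' (x : ℝ) :
    HasDerivAt Real.tanh (1 - Real.tanh x ^ 2) x := by
  have hc := Real.cosh_pos x
  have h1 := Real.cosh_sq_sub_sinh_sq x
  have hd := (Real.hasDerivAt_sinh x).div (Real.hasDerivAt_cosh x) hc.ne'
  have heq : Real.tanh = fun y => Real.sinh y / Real.cosh y := by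
    funext y; exact Real.tanh_eq_sinh_div_cosh y
  have hval : 1 - Real.tanh x ^ 2 =
      (Real.cosh x * Real.cosh x - Real.sinh x * Real.sinh x) / Real.cosh x ^ 2 := by
    rw [Real.tanh_eq_sinh_div_cosh x, div_pow]
    field_simp
  rw [hval, heq]
  exact hd

private lemma q_pos {t : ℝ} (ht : t ^ 2 < 1) : 0 < 1 - (1 / 3) * t ^ 2 := by nlinarith

private lemma hasDerivAt_sqrtq {t : ℝ} (ht : t ^ 2 < 1) :
    HasDerivAt (fun t : ℝ => Real.sqrt (1 - (1 / 3) * t ^ 2))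
      (-(t / 3) / Real.sqrt (1 - (1 / 3) * t ^ 2)) t := by
  have hq := q_pos ht
  have hin : HasDerivAt (fun t : ℝ => 1 - (1 / 3) * t ^ 2) (-(2 / 3) * t) t := by
    have : HasDerivAt (fun t : ℝ => 1 - (1 / 3) * t ^ 2) (0 - (1/3) * (2 * t ^ 1)) t :=
      (hasDerivAt_const t 1).sub (((hasDerivAt_pow 2 t)).const_mul (1/3))
    convert this using 1; ring
  have hs : 0 < Real.sqrt (1 - (1 / 3) * t ^ 2) := Real.sqrt_pos.mpr hq
  have h3 : -(t / 3) / Real.sqrt (1 - (1 / 3) * t ^ 2)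
      = 1 / (2 * Real.sqrt (1 - (1 / 3) * t ^ 2)) * (-(2 / 3) * t) := by
    field_simp
  rw [h3]
  exact (Real.hasDerivAt_sqrt hq.ne').comp t hin

private lemma hasDerivAt_A {t : ℝ} (ht : t ^ 2 < 1) :
    HasDerivAt (fun t : ℝ => Real.sqrt (2 / 3) * t / Real.sqrt (1 - (1 / 3) * t ^ 2))
      (Real.sqrt (2 / 3) / Real.sqrt (1 - (1 / 3) * t ^ 2) ^ 3) t := by
  have hq := q_pos ht
  have hr : 0 < Real.sqrt (1 - (1 / 3) * t ^ 2) := Real.sqrt_pos.mpr hq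
  have hrsq : Real.sqrt (1 - (1 / 3) * t ^ 2) ^ 2 = 1 - (1 / 3) * t ^ 2 :=
    Real.sq_sqrt hq.le
  have hnum : HasDerivAt (fun t : ℝ => Real.sqrt (2 / 3) * t) (Real.sqrt (2 / 3)) t := by
    simpa using (hasDerivAt_id t).const_mul (Real.sqrt (2 / 3))
  have h2 := hnum.fun_div (hasDerivAt_sqrtq ht) hr.ne'
  refine h2.congr_deriv ?_
  set r := Real.sqrt (1 - (1 / 3) * t ^ 2) with hrdef
  set a := Real.sqrt (2 / 3) with hadef
  field_simp
  linear_combination (3*a) * hrsq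

private lemma hasDerivAt_B {t : ℝ} (ht : t ^ 2 < 1) :
    HasDerivAt (fun t : ℝ => Real.sqrt (2 / 3) / Real.sqrt (1 - (1 / 3) * t ^ 2) ^ 3)
      (Real.sqrt (2 / 3) * t / Real.sqrt (1 - (1 / 3) * t ^ 2) ^ 5) t := by
  have hq := q_pos ht
  have hr : 0 < Real.sqrt (1 - (1 / 3) * t ^ 2) := Real.sqrt_pos.mpr hq
  have hrsq : Real.sqrt (1 - (1 / 3) * t ^ 2) ^ 2 = 1 - (1 / 3) * t ^ 2 :=
    Real.sq_sqrt hq.le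
  have hden : HasDerivAt (fun t : ℝ => Real.sqrt (1 - (1 / 3) * t ^ 2) ^ 3)
      (3 * Real.sqrt (1 - (1 / 3) * t ^ 2) ^ 2 * (-(t / 3) / Real.sqrt (1 - (1 / 3) * t ^ 2))) t := by
    simpa using (hasDerivAt_sqrtq ht).fun_pow 3
  have h2 := (hasDerivAt_const t (Real.sqrt (2 / 3))).fun_div hden (by positivity)
  refine h2.congr_deriv ?_
  set r := Real.sqrt (1 - (1 / 3) * t ^ 2) with hrdef
  set a := Real.sqrt (2 / 3) with hadef
  field_simp
  ring

set_option maxHeartbeats 1000000 in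
/-- For `ω > 0`, `h(x) = √(2/3)·tanh(x/√ω)/√(1 − (1/3)tanh²(x/√ω))`
satisfies `−ω h'' − h + h⁵ = 0` and `h(x) → ±1` as `x → ±∞`. -/
theorem stmt_9 (ω : ℝ) (hω : 0 < ω)
    (h : ℝ → ℝ)
    (hh : h = fun x : ℝ => Real.sqrt (2 / 3) * Real.tanh (x / Real.sqrt ω) /
      Real.sqrt (1 - (1 / 3) * Real.tanh (x / Real.sqrt ω) ^ 2)) :
    (∀ x : ℝ, -ω * deriv (deriv h) x - h x + h x ^ 5 = 0) ∧
    Filter.Tendsto h Filter.atTop (nhds 1) ∧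
    Filter.Tendsto h Filter.atBot (nhds (-1)) := by
  have hs : 0 < Real.sqrt ω := Real.sqrt_pos.mpr hω
  have hω' : Real.sqrt ω ^ 2 = ω := Real.sq_sqrt hω.le
  set s := Real.sqrt ω with hsdef
  set τ : ℝ → ℝ := fun x => Real.tanh (x / s) with hτ
  have hτd : ∀ x : ℝ, HasDerivAt τ ((1 - τ x ^ 2) / s) x := by
    intro x
    have hlin : HasDerivAt (fun x : ℝ => x / s) (1 / s) x := by
      simpa using (hasDerivAt_id x).div_const s
    have h2 := (hasDerivAt_tanh' (x / s)).comp x hlin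
    have : (1 - τ x ^ 2) / s = (1 - Real.tanh (x / s) ^ 2) * (1 / s) := by
      rw [hτ]; ring
    rw [this]
    exact h2
  have hτlt : ∀ x : ℝ, τ x ^ 2 < 1 := fun x => _root_.tanh_sq_lt_one _
  have hder1 : ∀ x : ℝ, HasDerivAt h
      (Real.sqrt (2 / 3) / Real.sqrt (1 - (1 / 3) * τ x ^ 2) ^ 3 * ((1 - τ x ^ 2) / s)) x := by
    intro x
    have := (hasDerivAt_A (hτlt x)).comp x (hτd x)
    rw [hh]
    exact this
  set h1 : ℝ → ℝ := fun x =>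
    Real.sqrt (2 / 3) / Real.sqrt (1 - (1 / 3) * τ x ^ 2) ^ 3 * ((1 - τ x ^ 2) / s) with hh1
  have hderiv_h : deriv h = h1 := funext fun x => (hder1 x).deriv
  have hder2 : ∀ x : ℝ, HasDerivAt h1
      (Real.sqrt (2 / 3) * τ x / Real.sqrt (1 - (1 / 3) * τ x ^ 2) ^ 5 * ((1 - τ x ^ 2) / s) *
        ((1 - τ x ^ 2) / s)
       + Real.sqrt (2 / 3) / Real.sqrt (1 - (1 / 3) * τ x ^ 2) ^ 3 *
        ((-(2 * τ x) * ((1 - τ x ^ 2) / s)) / s)) x := by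
    intro x
    have hB := (hasDerivAt_B (hτlt x)).comp x (hτd x)
    have hfac : HasDerivAt (fun x => (1 - τ x ^ 2) / s)
        ((-(2 * τ x) * ((1 - τ x ^ 2) / s)) / s) x := by
      have h3 : HasDerivAt (fun x => 1 - τ x ^ 2) (-(2 * τ x) * ((1 - τ x ^ 2) / s)) x := by
        have h4 := ((hτd x).fun_pow 2).const_sub 1
        refine h4.congr_deriv ?_
        push_cast
        ring
      simpa using h3.div_const s
    exact hB.mul hfac
  refine ⟨?_, ?_, ?_⟩
  · intro x
    rw [hderiv_h, (hder2 x).deriv, hh]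
    simp only
    have ht := hτlt x
    have hq := q_pos ht
    have hr : 0 < Real.sqrt (1 - (1 / 3) * τ x ^ 2) := Real.sqrt_pos.mpr hq
    have hrsq : Real.sqrt (1 - (1 / 3) * τ x ^ 2) ^ 2 = 1 - (1 / 3) * τ x ^ 2 :=
      Real.sq_sqrt hq.le
    have hasq : Real.sqrt (2 / 3) ^ 2 = 2 / 3 := Real.sq_sqrt (by norm_num)
    rw [← hω']
    set t := τ x with htdef
    set r := Real.sqrt (1 - (1 / 3) * t ^ 2) with hrdef
    set a := Real.sqrt (2 / 3) with hadef
    have htx : Real.tanh (x / s) = t := rfl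
    rw [htx]
    field_simp
    linear_combination (a*t*(2*(1-t^2) - r^2 - (1 - (1/3)*t^2))) * hrsq
      + (a*t^5*(a^2+2/3)) * hasq
  · have htanh_top : Filter.Tendsto Real.tanh atTop (nhds 1) := by
      have heq : Real.tanh = fun x =>
          (1 - Real.exp (-(2 * x))) / (1 + Real.exp (-(2 * x))) := by
        funext x
        rw [Real.tanh_eq_sinh_div_cosh x, Real.sinh_eq, Real.cosh_eq]
        have he : (0:ℝ) < Real.exp x := Real.exp_pos x
        have he2 : (0:ℝ) < Real.exp (-x) := Real.exp_pos (-x)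
        have hee : Real.exp (-(2 * x)) = Real.exp (-x) / Real.exp x := by
          rw [← Real.exp_sub]; ring_nf
        rw [hee]
        have hden : (0:ℝ) < 1 + Real.exp (-x) / Real.exp x := by positivity
        field_simp
      rw [heq]
      have hexp : Filter.Tendsto (fun x : ℝ => Real.exp (-(2 * x))) atTop (nhds 0) := by
        apply Real.tendsto_exp_atBot.comp
        apply tendsto_neg_atBot_iff.mpr
        exact Filter.Tendsto.const_mul_atTop (by norm_num) tendsto_id
      have hone : Filter.Tendsto (fun _ : ℝ => (1:ℝ)) atTop (nhds 1) := tendsto_const_nhds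
      have := (hone.sub hexp).div (hone.add hexp) (by norm_num : (1:ℝ) + 0 ≠ 0)
      simpa [Pi.div_def] using this
    have htanh_bot : Filter.Tendsto Real.tanh atBot (nhds (-1)) := by
      have h2 : Filter.Tendsto (fun x : ℝ => -Real.tanh (-x)) atBot (nhds (-1)) :=
        (htanh_top.comp tendsto_neg_atBot_atTop).neg
      simpa [Real.tanh_neg] using h2
    have hA_cont : ∀ t₀ : ℝ, 0 < 1 - (1 / 3) * t₀ ^ 2 → ContinuousAt
        (fun t : ℝ => Real.sqrt (2 / 3) * t / Real.sqrt (1 - (1 / 3) * t ^ 2)) t₀ := by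
      intro t₀ hq
      apply ContinuousAt.div
      · fun_prop
      · exact (Real.continuous_sqrt.continuousAt).comp (by fun_prop)
      · exact (Real.sqrt_pos.mpr hq).ne'
    have hA1 : Real.sqrt (2 / 3) * 1 / Real.sqrt (1 - (1 / 3) * 1 ^ 2) = 1 := by
      have h2 : (1:ℝ) - (1 / 3) * 1 ^ 2 = 2 / 3 := by norm_num
      rw [h2, mul_one, div_self (by positivity : Real.sqrt (2/3) ≠ 0)]
    have hAm1 : Real.sqrt (2 / 3) * (-1) / Real.sqrt (1 - (1 / 3) * (-1) ^ 2) = -1 := by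
      have h2 : (1:ℝ) - (1 / 3) * (-1) ^ 2 = 2 / 3 := by norm_num
      rw [h2, mul_neg_one, neg_div, div_self (by positivity : Real.sqrt (2/3) ≠ 0)]
    have hdiv_top : Filter.Tendsto (fun x : ℝ => x / s) atTop atTop :=
      tendsto_id.atTop_div_const hs
    rw [hh]
    have h3 := (hA_cont 1 (by norm_num)).tendsto.comp (htanh_top.comp hdiv_top)
    rw [hA1] at h3
    exact h3
  · have htanh_top : Filter.Tendsto Real.tanh atTop (nhds 1) := by
      have heq : Real.tanh = fun x =>
          (1 - Real.exp (-(2 * x))) / (1 + Real.exp (-(2 * x))) := by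
        funext x
        rw [Real.tanh_eq_sinh_div_cosh x, Real.sinh_eq, Real.cosh_eq]
        have he : (0:ℝ) < Real.exp x := Real.exp_pos x
        have he2 : (0:ℝ) < Real.exp (-x) := Real.exp_pos (-x)
        have hee : Real.exp (-(2 * x)) = Real.exp (-x) / Real.exp x := by
          rw [← Real.exp_sub]; ring_nf
        rw [hee]
        have hden : (0:ℝ) < 1 + Real.exp (-x) / Real.exp x := by positivity
        field_simp
      rw [heq]
      have hexp : Filter.Tendsto (fun x : ℝ => Real.exp (-(2 * x))) atTop (nhds 0) := by
        apply Real.tendsto_exp_atBot.comp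
        apply tendsto_neg_atBot_iff.mpr
        exact Filter.Tendsto.const_mul_atTop (by norm_num) tendsto_id
      have hone : Filter.Tendsto (fun _ : ℝ => (1:ℝ)) atTop (nhds 1) := tendsto_const_nhds
      have := (hone.sub hexp).div (hone.add hexp) (by norm_num : (1:ℝ) + 0 ≠ 0)
      simpa [Pi.div_def] using this
    have htanh_bot : Filter.Tendsto Real.tanh atBot (nhds (-1)) := by
      have h2 : Filter.Tendsto (fun x : ℝ => -Real.tanh (-x)) atBot (nhds (-1)) :=
        (htanh_top.comp tendsto_neg_atBot_atTop).neg
      simpa [Real.tanh_neg] using h2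
    have hA_cont : ContinuousAt
        (fun t : ℝ => Real.sqrt (2 / 3) * t / Real.sqrt (1 - (1 / 3) * t ^ 2)) (-1) := by
      have hq : (0:ℝ) < 1 - (1 / 3) * (-1:ℝ) ^ 2 := by norm_num
      apply ContinuousAt.div
      · fun_prop
      · exact (Real.continuous_sqrt.continuousAt).comp (by fun_prop)
      · exact (Real.sqrt_pos.mpr hq).ne'
    have hAm1 : Real.sqrt (2 / 3) * (-1) / Real.sqrt (1 - (1 / 3) * (-1) ^ 2) = -1 := by
      have h2 : (1:ℝ) - (1 / 3) * (-1) ^ 2 = 2 / 3 := by norm_num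
      rw [h2, mul_neg_one, neg_div, div_self (by positivity : Real.sqrt (2/3) ≠ 0)]
    have hdiv_bot : Filter.Tendsto (fun x : ℝ => x / s) atBot atBot :=
      tendsto_id.atBot_div_const hs
    rw [hh]
    have h3 := hA_cont.tendsto.comp (htanh_bot.comp hdiv_bot)
    rw [hAm1] at h3
    exact h3
end

section
/- Let K(κ) = ∫₀^{π/2} (1 − κ² sin²θ)^{−1/2} dθ and E(κ) = ∫₀^{π/2} (1 − κ² sin²θ)^{1/2} dθ. Then the function κ ↦ K(κ) · ((1 + κ²) E(κ) − (1 − κ²) K(κ)) / (1 + κ²) is strictly increasing on (0,1). -/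
set_option maxHeartbeats 1000000

noncomputable def stmt16_d (κ θ : ℝ) : ℝ := Real.sqrt (1 - κ^2 * Real.sin θ^2)
noncomputable def s16K (r : ℝ) : ℝ := ∫ θ in (0:ℝ)..(Real.pi/2), (stmt16_d r θ)⁻¹
noncomputable def s16E (r : ℝ) : ℝ := ∫ θ in (0:ℝ)..(Real.pi/2), stmt16_d r θ
noncomputable def s16c (r : ℝ) : ℝ := (1-r^2)/(1+r^2)
noncomputable def s16I (r θ : ℝ) : ℝ :=
  (s16E r/2 - s16c r * s16K r) * (stmt16_d r θ)⁻¹ + (s16K r/2) * stmt16_d r θ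
noncomputable def s16H (r θ φ : ℝ) : ℝ :=
  (stmt16_d r θ/2 - s16c r * (stmt16_d r θ)⁻¹) * (stmt16_d r φ)⁻¹
    + ((stmt16_d r θ)⁻¹/2) * stmt16_d r φ

lemma stmt16_d_base {κ : ℝ} (hκ : κ^2 < 1) (θ : ℝ) : 0 < 1 - κ^2 * Real.sin θ^2 := by
  nlinarith [Real.sin_sq_le_one θ, sq_nonneg κ, sq_nonneg (Real.sin θ)]

lemma stmt16_d_pos {κ : ℝ} (hκ : κ^2 < 1) (θ : ℝ) : 0 < stmt16_d κ θ :=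
  Real.sqrt_pos.2 (stmt16_d_base hκ θ)

lemma stmt16_d_cont (κ : ℝ) : Continuous (stmt16_d κ) :=
  (continuous_const.sub (continuous_const.mul ((Real.continuous_sin.pow 2)))).sqrt

lemma stmt16_dinv_cont {κ : ℝ} (hκ : κ^2 < 1) : Continuous (fun θ => (stmt16_d κ θ)⁻¹) :=
  (stmt16_d_cont κ).inv₀ (fun θ => (stmt16_d_pos hκ θ).ne')

lemma stmt16_comb {κ : ℝ} (hκ : κ^2 < 1) (A B : ℝ) :
    ∫ φ in (0:ℝ)..(Real.pi/2), (A * (stmt16_d κ φ)⁻¹ + B * stmt16_d κ φ)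
      = A * s16K κ + B * s16E κ := by
  rw [show s16K κ = ∫ θ in (0:ℝ)..(Real.pi/2), (stmt16_d κ θ)⁻¹ from rfl,
    show s16E κ = ∫ θ in (0:ℝ)..(Real.pi/2), stmt16_d κ θ from rfl,
    ← intervalIntegral.integral_const_mul, ← intervalIntegral.integral_const_mul,
    ← intervalIntegral.integral_add (f := fun x => A * (stmt16_d κ x)⁻¹)
      (g := fun x => B * stmt16_d κ x)
      ((continuous_const.mul (stmt16_dinv_cont hκ)).intervalIntegrable _ _)
      ((continuous_const.mul (stmt16_d_cont κ)).intervalIntegrable _ _)]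



/-- Core pointwise inequality. -/
lemma stmt16_core (u₁ u₂ a b : ℝ) (hu₁ : 0 < u₁) (h₁₂ : u₁ < u₂) (hu₂ : u₂ < 1)
    (ha0 : 0 ≤ a) (ha1 : a ≤ 1) (hb0 : 0 ≤ b) (hb1 : b ≤ 1) :
    (((1 - u₁*a) + (1 - u₁*b))/2 - (1 - u₁)/(1 + u₁)) /
      (Real.sqrt (1 - u₁*a) * Real.sqrt (1 - u₁*b))
    < (((1 - u₂*a) + (1 - u₂*b))/2 - (1 - u₂)/(1 + u₂)) /
      (Real.sqrt (1 - u₂*a) * Real.sqrt (1 - u₂*b)) := by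
  have h1a : 0 < 1 - u₁*a := by nlinarith
  have h1b : 0 < 1 - u₁*b := by nlinarith
  have h2a : 0 < 1 - u₂*a := by nlinarith
  have h2b : 0 < 1 - u₂*b := by nlinarith
  have hP₁ : 0 < Real.sqrt (1 - u₁*a) * Real.sqrt (1 - u₁*b) :=
    mul_pos (Real.sqrt_pos.2 h1a) (Real.sqrt_pos.2 h1b)
  have hP₂ : 0 < Real.sqrt (1 - u₂*a) * Real.sqrt (1 - u₂*b) :=
    mul_pos (Real.sqrt_pos.2 h2a) (Real.sqrt_pos.2 h2b)
  have hN₁ : 0 < 4 - (1 + u₁)*(a + b) := by nlinarith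
  have hN₂ : 0 < 4 - (1 + u₂)*(a + b) := by nlinarith
  have hd₁ : (0:ℝ) < 1 + u₁ := by linarith
  have hd₂ : (0:ℝ) < 1 + u₂ := by linarith
  have e₁ : ((1 - u₁*a) + (1 - u₁*b))/2 - (1 - u₁)/(1 + u₁)
      = (u₁/(2*(1+u₁))) * (4 - (1 + u₁)*(a + b)) := by
    field_simp
    ring
  have e₂ : ((1 - u₂*a) + (1 - u₂*b))/2 - (1 - u₂)/(1 + u₂)
      = (u₂/(2*(1+u₂))) * (4 - (1 + u₂)*(a + b)) := by
    field_simp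
    ring
  rw [e₁, e₂, mul_div_assoc, mul_div_assoc]
  have key1 : (4 - (1 + u₁)*(a + b)) / (Real.sqrt (1 - u₁*a) * Real.sqrt (1 - u₁*b))
      ≤ (4 - (1 + u₂)*(a + b)) / (Real.sqrt (1 - u₂*a) * Real.sqrt (1 - u₂*b)) := by
    rw [div_le_div_iff₀ hP₁ hP₂]
    apply le_of_pow_le_pow_left₀ two_ne_zero
      (mul_nonneg hN₂.le hP₁.le)
    have q2 : ((4 - (1 + u₁)*(a + b)) * (Real.sqrt (1 - u₂*a) * Real.sqrt (1 - u₂*b)))^2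
        = (4 - (1 + u₁)*(a + b))^2 * ((1 - u₂*a) * (1 - u₂*b)) := by
      rw [mul_pow, mul_pow, Real.sq_sqrt h2a.le, Real.sq_sqrt h2b.le]
    have q1 : ((4 - (1 + u₂)*(a + b)) * (Real.sqrt (1 - u₁*a) * Real.sqrt (1 - u₁*b)))^2
        = (4 - (1 + u₂)*(a + b))^2 * ((1 - u₁*a) * (1 - u₁*b)) := by
      rw [mul_pow, mul_pow, Real.sq_sqrt h1a.le, Real.sq_sqrt h1b.le]
    rw [q1, q2]
    -- polynomial inequality
    have hC0 : 0 ≤ (a+b)*(4-(a+b))*(2-(a+b)) :=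
      mul_nonneg (mul_nonneg (by linarith) (by linarith)) (by linarith)
    have hG : 0 ≤ (a+b)*(4-(a+b))*(2-(a+b)) + ((a-b)^2 - a*b*(2-(a+b))*(6-(a+b))) := by
      have t1 : 0 ≤ (2-(a+b)) * (4*(a*(1-a)) + 4*(b*(1-b)) + (8-(a+b))*(a-b)^2
          + (a+b)*(2-(a+b))*(6-(a+b))) :=
        mul_nonneg (by linarith)
          (add_nonneg (add_nonneg (add_nonneg
            (by nlinarith) (by nlinarith))
            (mul_nonneg (by linarith) (sq_nonneg _)))
            (mul_nonneg (mul_nonneg (by linarith) (by linarith)) (by linarith)))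
      have hid4 : 4*((a+b)*(4-(a+b))*(2-(a+b)) + ((a-b)^2 - a*b*(2-(a+b))*(6-(a+b))))
          = (2-(a+b)) * (4*(a*(1-a)) + 4*(b*(1-b)) + (8-(a+b))*(a-b)^2
          + (a+b)*(2-(a+b))*(6-(a+b))) + 4*(a-b)^2 := by ring
      nlinarith [t1, sq_nonneg (a-b), hid4]
    have hE0 : 0 ≤ (a+b)*(4-(a+b))*(2-(a+b))
        + u₂*((a-b)^2 - a*b*(2-(a+b))*(6-(a+b))) := by
      have hrw : (a+b)*(4-(a+b))*(2-(a+b)) + u₂*((a-b)^2 - a*b*(2-(a+b))*(6-(a+b)))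
          = (1-u₂)*((a+b)*(4-(a+b))*(2-(a+b)))
            + u₂*((a+b)*(4-(a+b))*(2-(a+b)) + ((a-b)^2 - a*b*(2-(a+b))*(6-(a+b)))) := by
        ring
      rw [hrw]
      exact add_nonneg (mul_nonneg (by linarith) hC0) (mul_nonneg (by linarith) hG)
    have hW : 0 ≤ (1-u₂)*((a+b)*(2-(a+b))) + 2*u₂*(a*(1-b)^2 + b*(1-a)^2) :=
      add_nonneg (mul_nonneg (by linarith)
          (mul_nonneg (by linarith) (by linarith)))
        (mul_nonneg (by linarith)
          (add_nonneg (mul_nonneg ha0 (sq_nonneg _)) (mul_nonneg hb0 (sq_nonneg _))))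
    have hE1 : 0 ≤ (4 - (1 + u₂)*(a + b)) *
        ((1-u₂)*((a+b)*(2-(a+b))) + 2*u₂*(a*(1-b)^2 + b*(1-a)^2)) :=
      mul_nonneg hN₂.le hW
    have hid : u₂ * ((4 - (1 + u₂)*(a + b))^2 * ((1 - u₁*a) * (1 - u₁*b))
          - (4 - (1 + u₁)*(a + b))^2 * ((1 - u₂*a) * (1 - u₂*b)))
        = (u₂ - u₁) * ((u₂ - u₁) * ((a+b)*(4-(a+b))*(2-(a+b))
              + u₂*((a-b)^2 - a*b*(2-(a+b))*(6-(a+b))))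
            + u₁ * ((4 - (1 + u₂)*(a + b)) *
              ((1-u₂)*((a+b)*(2-(a+b))) + 2*u₂*(a*(1-b)^2 + b*(1-a)^2)))) := by
      ring
    have hRHS : 0 ≤ (u₂ - u₁) * ((u₂ - u₁) * ((a+b)*(4-(a+b))*(2-(a+b))
              + u₂*((a-b)^2 - a*b*(2-(a+b))*(6-(a+b))))
            + u₁ * ((4 - (1 + u₂)*(a + b)) *
              ((1-u₂)*((a+b)*(2-(a+b))) + 2*u₂*(a*(1-b)^2 + b*(1-a)^2)))) :=
      mul_nonneg (by linarith)
        (add_nonneg (mul_nonneg (by linarith) hE0) (mul_nonneg hu₁.le hE1))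
    have hMul : 0 ≤ u₂ * ((4 - (1 + u₂)*(a + b))^2 * ((1 - u₁*a) * (1 - u₁*b))
          - (4 - (1 + u₁)*(a + b))^2 * ((1 - u₂*a) * (1 - u₂*b))) := by
      rw [hid]; exact hRHS
    have hΔ := nonneg_of_mul_nonneg_right hMul (by linarith : (0:ℝ) < u₂)
    linarith
  have key2 : u₁/(2*(1+u₁)) < u₂/(2*(1+u₂)) := by
    rw [div_lt_div_iff₀ (by linarith) (by linarith)]
    nlinarith
  have posF : 0 < (4 - (1 + u₁)*(a + b)) / (Real.sqrt (1 - u₁*a) * Real.sqrt (1 - u₁*b)) :=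
    div_pos hN₁ hP₁
  have posA2 : 0 < u₂/(2*(1+u₂)) := div_pos (by linarith) (by linarith)
  calc u₁/(2*(1+u₁)) * ((4 - (1 + u₁)*(a + b)) / (Real.sqrt (1 - u₁*a) * Real.sqrt (1 - u₁*b)))
      < u₂/(2*(1+u₂)) * ((4 - (1 + u₁)*(a + b)) / (Real.sqrt (1 - u₁*a) * Real.sqrt (1 - u₁*b))) :=
        mul_lt_mul_of_pos_right key2 posF
    _ ≤ u₂/(2*(1+u₂)) * ((4 - (1 + u₂)*(a + b)) / (Real.sqrt (1 - u₂*a) * Real.sqrt (1 - u₂*b))) :=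
        mul_le_mul_of_nonneg_left key1 posA2.le

lemma s16_fieldid (x y c : ℝ) (h1 : x ≠ 0) (h2 : y ≠ 0) :
    (x/2 - c*x⁻¹)*y⁻¹ + (x⁻¹/2)*y = ((x^2 + y^2)/2 - c)/(x*y) := by
  field_simp
  ring

lemma s16_stepA {r : ℝ} (hr : r^2 < 1) (θ : ℝ) :
    (∫ φ in (0:ℝ)..(Real.pi/2), s16H r θ φ) = s16I r θ := by
  simp only [s16H]
  rw [stmt16_comb hr (stmt16_d r θ/2 - s16c r * (stmt16_d r θ)⁻¹) ((stmt16_d r θ)⁻¹/2)]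
  simp only [s16I]
  ring

lemma s16_stepB {r : ℝ} (hr : r^2 < 1) :
    s16K r * ((1 + r^2) * s16E r - (1 - r^2) * s16K r) / (1 + r^2)
      = ∫ θ in (0:ℝ)..(Real.pi/2), s16I r θ := by
  simp only [s16I]
  rw [stmt16_comb hr (s16E r/2 - s16c r * s16K r) (s16K r/2)]
  have h1 : (0:ℝ) < 1 + r^2 := by positivity
  simp only [s16c]
  field_simp
  ring

lemma s16_stepC {p q : ℝ} (hp : 0 < p) (hpq : p < q) (hq : q < 1) (θ φ : ℝ) :
    s16H p θ φ < s16H q θ φ := by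
  have hp2 : p^2 < 1 := by nlinarith
  have hq2 : q^2 < 1 := by nlinarith
  have hP : s16H p θ φ
      = (((1 - p^2*Real.sin θ^2) + (1 - p^2*Real.sin φ^2))/2 - (1 - p^2)/(1 + p^2)) /
        (Real.sqrt (1 - p^2*Real.sin θ^2) * Real.sqrt (1 - p^2*Real.sin φ^2)) := by
    rw [show s16H p θ φ = (stmt16_d p θ/2 - s16c p * (stmt16_d p θ)⁻¹) * (stmt16_d p φ)⁻¹
        + ((stmt16_d p θ)⁻¹/2) * stmt16_d p φ from rfl,
      s16_fieldid _ _ _ (stmt16_d_pos hp2 θ).ne' (stmt16_d_pos hp2 φ).ne',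
      show stmt16_d p θ^2 = 1 - p^2*Real.sin θ^2 from Real.sq_sqrt (stmt16_d_base hp2 θ).le,
      show stmt16_d p φ^2 = 1 - p^2*Real.sin φ^2 from Real.sq_sqrt (stmt16_d_base hp2 φ).le]
    rfl
  have hQ : s16H q θ φ
      = (((1 - q^2*Real.sin θ^2) + (1 - q^2*Real.sin φ^2))/2 - (1 - q^2)/(1 + q^2)) /
        (Real.sqrt (1 - q^2*Real.sin θ^2) * Real.sqrt (1 - q^2*Real.sin φ^2)) := by
    rw [show s16H q θ φ = (stmt16_d q θ/2 - s16c q * (stmt16_d q θ)⁻¹) * (stmt16_d q φ)⁻¹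
        + ((stmt16_d q θ)⁻¹/2) * stmt16_d q φ from rfl,
      s16_fieldid _ _ _ (stmt16_d_pos hq2 θ).ne' (stmt16_d_pos hq2 φ).ne',
      show stmt16_d q θ^2 = 1 - q^2*Real.sin θ^2 from Real.sq_sqrt (stmt16_d_base hq2 θ).le,
      show stmt16_d q φ^2 = 1 - q^2*Real.sin φ^2 from Real.sq_sqrt (stmt16_d_base hq2 φ).le]
    rfl
  rw [hP, hQ]
  exact stmt16_core (p^2) (q^2) (Real.sin θ^2) (Real.sin φ^2)
    (by positivity) (by nlinarith) hq2
    (sq_nonneg _) (Real.sin_sq_le_one θ) (sq_nonneg _) (Real.sin_sq_le_one φ)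

lemma s16H_cont {r : ℝ} (hr : r^2 < 1) (θ : ℝ) : Continuous (fun φ => s16H r θ φ) := by
  unfold s16H
  exact (continuous_const.mul (stmt16_dinv_cont hr)).add
    (continuous_const.mul (stmt16_d_cont r))

lemma s16I_cont {r : ℝ} (hr : r^2 < 1) : Continuous (fun θ => s16I r θ) := by
  unfold s16I
  exact (continuous_const.mul (stmt16_dinv_cont hr)).add
    (continuous_const.mul (stmt16_d_cont r))

lemma s16_stepD {p q : ℝ} (hp : 0 < p) (hpq : p < q) (hq : q < 1) (θ : ℝ) :
    s16I p θ < s16I q θ := by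
  have hp2 : p^2 < 1 := by nlinarith
  have hq2 : q^2 < 1 := by nlinarith
  rw [← s16_stepA hp2 θ, ← s16_stepA hq2 θ]
  have hip : IntervalIntegrable (fun φ => s16H p θ φ) MeasureTheory.volume 0 (Real.pi/2) :=
    (s16H_cont hp2 θ).intervalIntegrable _ _
  have hiq : IntervalIntegrable (fun φ => s16H q θ φ) MeasureTheory.volume 0 (Real.pi/2) :=
    (s16H_cont hq2 θ).intervalIntegrable _ _
  have hpos : 0 < ∫ φ in (0:ℝ)..(Real.pi/2), (s16H q θ φ - s16H p θ φ) :=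
    intervalIntegral.intervalIntegral_pos_of_pos (hiq.sub hip)
      (fun w => sub_pos.2 (s16_stepC hp hpq hq θ w)) (by positivity)
  rw [intervalIntegral.integral_sub hiq hip] at hpos
  linarith

/-- With `K` and `E` the complete elliptic integrals of first and second
kind, the function `κ ↦ K(κ)·((1 + κ²)E(κ) − (1 − κ²)K(κ))/(1 + κ²)` is strictly
increasing on `(0,1)`. -/
theorem stmt_16
    (K E : ℝ → ℝ)
    (hK : K = fun κ : ℝ => ∫ θ in (0 : ℝ)..(Real.pi / 2),
      (Real.sqrt (1 - κ ^ 2 * Real.sin θ ^ 2))⁻¹)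
    (hE : E = fun κ : ℝ => ∫ θ in (0 : ℝ)..(Real.pi / 2),
      Real.sqrt (1 - κ ^ 2 * Real.sin θ ^ 2)) :
    StrictMonoOn
      (fun κ : ℝ => K κ * ((1 + κ ^ 2) * E κ - (1 - κ ^ 2) * K κ) / (1 + κ ^ 2))
      (Set.Ioo (0 : ℝ) 1) := by
  subst hK hE
  intro x hx y hy hxy
  obtain ⟨hx0, hx1⟩ := hx
  obtain ⟨hy0, hy1⟩ := hy
  have hx2 : x^2 < 1 := by nlinarith
  have hy2 : y^2 < 1 := by nlinarith
  show s16K x * ((1 + x^2) * s16E x - (1 - x^2) * s16K x) / (1 + x^2)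
    < s16K y * ((1 + y^2) * s16E y - (1 - y^2) * s16K y) / (1 + y^2)
  rw [s16_stepB hx2, s16_stepB hy2]
  have hix : IntervalIntegrable (fun θ => s16I x θ) MeasureTheory.volume 0 (Real.pi/2) :=
    (s16I_cont hx2).intervalIntegrable _ _
  have hiy : IntervalIntegrable (fun θ => s16I y θ) MeasureTheory.volume 0 (Real.pi/2) :=
    (s16I_cont hy2).intervalIntegrable _ _
  have hpos : 0 < ∫ θ in (0:ℝ)..(Real.pi/2), (s16I y θ - s16I x θ) :=
    intervalIntegral.intervalIntegral_pos_of_pos (hiy.sub hix)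
      (fun w => sub_pos.2 (s16_stepD hx0 hxy hy1 w)) (by positivity)
  rw [intervalIntegral.integral_sub hiy hix] at hpos
  linarith
end

section
/- Let K(κ) = ∫₀^{π/2} (1 − κ² sin²θ)^{−1/2} dθ. Then the function κ ↦ K(κ)² (1 + κ²) is strictly increasing on (0,1). -/
private lemma aux_pos17 {κ : ℝ} (hκ : κ ^ 2 < 1) (θ : ℝ) :
    0 < 1 - κ ^ 2 * Real.sin θ ^ 2 := by
  nlinarith [Real.sin_sq_le_one θ, sq_nonneg κ, sq_nonneg (Real.sin θ)]

private lemma aux_cont17 {κ : ℝ} (hκ : κ ^ 2 < 1) :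
    Continuous fun θ : ℝ => (Real.sqrt (1 - κ ^ 2 * Real.sin θ ^ 2))⁻¹ := by
  apply Continuous.inv₀
  · exact Real.continuous_sqrt.comp (by continuity)
  · intro θ
    exact ne_of_gt (Real.sqrt_pos.2 (aux_pos17 hκ θ))

/-- With `K` the complete elliptic integral of the first kind, the function
`κ ↦ K(κ)² (1 + κ²)` is strictly increasing on `(0,1)`. -/
theorem stmt_17
    (K : ℝ → ℝ)
    (hK : K = fun κ : ℝ => ∫ θ in (0 : ℝ)..(Real.pi / 2),
      (Real.sqrt (1 - κ ^ 2 * Real.sin θ ^ 2))⁻¹) :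
    StrictMonoOn (fun κ : ℝ => K κ ^ 2 * (1 + κ ^ 2)) (Set.Ioo (0 : ℝ) 1) := by
  subst hK
  intro a ha b hb hab
  obtain ⟨ha0, ha1⟩ := ha
  obtain ⟨hb0, hb1⟩ := hb
  have ha2 : a ^ 2 < 1 := by nlinarith
  have hb2 : b ^ 2 < 1 := by nlinarith
  have hpi : (0 : ℝ) ≤ Real.pi / 2 := by positivity
  have hinta : IntervalIntegrable (fun θ : ℝ => (Real.sqrt (1 - a ^ 2 * Real.sin θ ^ 2))⁻¹)
      MeasureTheory.volume 0 (Real.pi / 2) := (aux_cont17 ha2).intervalIntegrable 0 (Real.pi / 2)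
  have hintb : IntervalIntegrable (fun θ : ℝ => (Real.sqrt (1 - b ^ 2 * Real.sin θ ^ 2))⁻¹)
      MeasureTheory.volume 0 (Real.pi / 2) := (aux_cont17 hb2).intervalIntegrable 0 (Real.pi / 2)
  set Ka := ∫ θ in (0 : ℝ)..(Real.pi / 2), (Real.sqrt (1 - a ^ 2 * Real.sin θ ^ 2))⁻¹ with hKadef
  set Kb := ∫ θ in (0 : ℝ)..(Real.pi / 2), (Real.sqrt (1 - b ^ 2 * Real.sin θ ^ 2))⁻¹ with hKbdef
  have hKa_pos : 0 < Ka := by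
    have h1 : (∫ _ in (0 : ℝ)..(Real.pi / 2), (1 : ℝ)) ≤ Ka := by
      apply intervalIntegral.integral_mono_on hpi intervalIntegrable_const hinta
      intro θ _
      have hlt := aux_pos17 ha2 θ
      have hle1 : Real.sqrt (1 - a ^ 2 * Real.sin θ ^ 2) ≤ 1 := by
        have h := Real.sqrt_le_sqrt (show 1 - a ^ 2 * Real.sin θ ^ 2 ≤ 1 by
          nlinarith [sq_nonneg a, sq_nonneg (Real.sin θ)])
        rwa [Real.sqrt_one] at h
      have hpos : 0 < Real.sqrt (1 - a ^ 2 * Real.sin θ ^ 2) := Real.sqrt_pos.2 hlt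
      rw [le_inv_comm₀ one_pos hpos]
      simpa using hle1
    have h2 : (∫ _ in (0 : ℝ)..(Real.pi / 2), (1 : ℝ)) = Real.pi / 2 := by simp
    have := Real.pi_pos
    linarith
  have hKab : Ka ≤ Kb := by
    apply intervalIntegral.integral_mono_on hpi hinta hintb
    intro θ _
    have hposb : 0 < Real.sqrt (1 - b ^ 2 * Real.sin θ ^ 2) := Real.sqrt_pos.2 (aux_pos17 hb2 θ)
    have hsq : Real.sqrt (1 - b ^ 2 * Real.sin θ ^ 2) ≤ Real.sqrt (1 - a ^ 2 * Real.sin θ ^ 2) := by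
      apply Real.sqrt_le_sqrt
      nlinarith [sq_nonneg (Real.sin θ), mul_self_le_mul_self ha0.le hab.le]
    exact inv_anti₀ hposb hsq
  show Ka ^ 2 * (1 + a ^ 2) < Kb ^ 2 * (1 + b ^ 2)
  clear_value Ka Kb
  calc Ka ^ 2 * (1 + a ^ 2) < Ka ^ 2 * (1 + b ^ 2) := by
        apply mul_lt_mul_of_pos_left _ (pow_pos hKa_pos 2)
        nlinarith [mul_self_le_mul_self ha0.le hab.le]
    _ ≤ Kb ^ 2 * (1 + b ^ 2) :=
        mul_le_mul_of_nonneg_right (pow_le_pow_left₀ hKa_pos.le hKab 2) (by positivity)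
end

section
/- Fix an integer k ≥ 1, L > 0, and an open interval I ⊆ (0, ∞). Let H: I × ℝ → ℝ be twice continuously differentiable (jointly in (ω, x)) such that for each ω ∈ I the function h_ω = H(ω, ·) is L-periodic and satisfies −ω ∂_x² H(ω,x) − H(ω,x) + H(ω,x)^{2k+1} = 0 for all x ∈ ℝ, and assume ∂_ω H is twice continuously differentiable in x. Then for every ω ∈ I, ∫₀^L (∂_x H(ω,x))² dx + (k/(k+1)) · d/dω [ ∫₀^L H(ω,x)^{2k+2} dx ] = 0. -/
open MeasureTheory intervalIntegral Set

/-- Derivative under the integral sign for continuous integrand and derivative. -/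
lemma hasDerivAt_param_integral {G G' : ℝ → ℝ → ℝ} {L : ℝ}
    (hG : Continuous fun p : ℝ × ℝ => G p.1 p.2)
    (hG' : Continuous fun p : ℝ × ℝ => G' p.1 p.2)
    (hd : ∀ w x : ℝ, HasDerivAt (fun w => G w x) (G' w x) w) (ω : ℝ) :
    HasDerivAt (fun w => ∫ x in (0:ℝ)..L, G w x) (∫ x in (0:ℝ)..L, G' ω x) ω := by
  have hcont : ∀ w : ℝ, Continuous fun x => G w x :=
    fun w => hG.comp (continuous_const.prodMk continuous_id)
  have hcont' : ∀ w : ℝ, Continuous fun x => G' w x :=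
    fun w => hG'.comp (continuous_const.prodMk continuous_id)
  have hK : IsCompact ((Icc (ω - 1) (ω + 1)) ×ˢ (uIcc (0:ℝ) L)) :=
    isCompact_Icc.prod isCompact_uIcc
  obtain ⟨C, hC⟩ := hK.exists_bound_of_continuousOn hG'.continuousOn
  have := intervalIntegral.hasDerivAt_integral_of_dominated_loc_of_deriv_le
    (F := fun w x => G w x) (F' := fun w x => G' w x) (x₀ := ω) (a := 0) (b := L)
    (bound := fun _ => C) (s := Metric.ball ω 1) (μ := volume) (Metric.ball_mem_nhds ω one_pos)
    (Filter.Eventually.of_forall fun w => ((hcont w).aestronglyMeasurable).restrict)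
    ((hcont ω).intervalIntegrable _ _)
    ((hcont' ω).aestronglyMeasurable).restrict
    ?_ (intervalIntegrable_const) ?_
  · exact this.2
  · refine Filter.Eventually.of_forall fun x hx w hw => ?_
    have hx' : x ∈ uIcc (0:ℝ) L := uIoc_subset_uIcc hx
    have hw' : w ∈ Icc (ω - 1) (ω + 1) := by
      rw [Metric.mem_ball, Real.dist_eq] at hw
      constructor <;> [linarith [abs_lt.1 hw |>.1]; linarith [abs_lt.1 hw |>.2]]
    simpa using hC (w, x) ⟨hw', hx'⟩
  · exact Filter.Eventually.of_forall fun x _ w _ => hd w x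

/-- Integration by parts for periodic boundary terms. -/
lemma ibp_periodic {u v u' v' : ℝ → ℝ} {L : ℝ}
    (hu : ∀ x, HasDerivAt u (u' x) x) (hv : ∀ x, HasDerivAt v (v' x) x)
    (hu' : Continuous u') (hv' : Continuous v')
    (hpu : u L = u 0) (hpv : v L = v 0) :
    ∫ x in (0:ℝ)..L, u x * v' x = - ∫ x in (0:ℝ)..L, u' x * v x := by
  rw [intervalIntegral.integral_mul_deriv_eq_deriv_mul (fun x _ => hu x) (fun x _ => hv x)
    (hu'.intervalIntegrable _ _) (hv'.intervalIntegrable _ _), hpu, hpv]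
  ring

/-- For a jointly `C²` family `ω ↦ H(ω,·)` of `L`-periodic solutions of
`−ω ∂ₓ² H − H + H^(2k+1) = 0` on an open interval `I ⊆ (0,∞)`, with `∂_ω H` twice
continuously differentiable in `x`, one has for every `ω ∈ I`:
`∫₀^L (∂ₓH(ω,x))² dx + (k/(k+1)) · d/dω [∫₀^L H(ω,x)^(2k+2) dx] = 0`. -/
theorem stmt_18 (k : ℕ) (hk : 1 ≤ k) (L : ℝ) (hL : 0 < L)
    (a c : ℝ) (ha : 0 ≤ a) (I : Set ℝ) (hI : I = Set.Ioo a c)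
    (H : ℝ → ℝ → ℝ)
    (hsm : ContDiff ℝ 2 (fun p : ℝ × ℝ => H p.1 p.2))
    (hper : ∀ ω ∈ I, Function.Periodic (H ω) L)
    (hode : ∀ ω ∈ I, ∀ x : ℝ,
      -ω * deriv (deriv (H ω)) x - H ω x + H ω x ^ (2 * k + 1) = 0)
    (hηsm : ∀ ω ∈ I, ContDiff ℝ 2 (fun x : ℝ => deriv (fun w : ℝ => H w x) ω)) :
    ∀ ω ∈ I,
      (∫ x in (0 : ℝ)..L, (deriv (H ω) x) ^ 2)
        + ((k : ℝ) / ((k : ℝ) + 1)) *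
          deriv (fun w : ℝ => ∫ x in (0 : ℝ)..L, H w x ^ (2 * k + 2)) ω = 0 := by
  intro ω hω
  have hIopen : IsOpen I := hI ▸ isOpen_Ioo
  set F : ℝ × ℝ → ℝ := fun p => H p.1 p.2 with hFdef
  have hsmF : ContDiff ℝ 2 F := hsm
  have hFd : Differentiable ℝ F := hsmF.differentiable (by norm_num)
  have hf'C1 : ContDiff ℝ 1 (fderiv ℝ F) := hsmF.fderiv_right (by norm_num)
  have hf'd : Differentiable ℝ (fderiv ℝ F) := hf'C1.differentiable (by norm_num)
  set Fx : ℝ × ℝ → ℝ := fun p => fderiv ℝ F p (0,1) with hFxdef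
  set Fw : ℝ × ℝ → ℝ := fun p => fderiv ℝ F p (1,0) with hFwdef
  have hFxC1 : ContDiff ℝ 1 Fx := hf'C1.clm_apply contDiff_const
  have hFwC1 : ContDiff ℝ 1 Fw := hf'C1.clm_apply contDiff_const
  have hFxd : Differentiable ℝ Fx := hFxC1.differentiable (by norm_num)
  have hFwd : Differentiable ℝ Fw := hFwC1.differentiable (by norm_num)
  have cF : Continuous F := hsmF.continuous
  have cFx : Continuous Fx := hFxC1.continuous
  have cFw : Continuous Fw := hFwC1.continuous
  set Fxx : ℝ × ℝ → ℝ := fun p => fderiv ℝ Fx p (0,1) with hFxxdef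
  set Fwx : ℝ × ℝ → ℝ := fun p => fderiv ℝ Fx p (1,0) with hFwxdef
  set Fxw : ℝ × ℝ → ℝ := fun p => fderiv ℝ Fw p (0,1) with hFxwdef
  have cFxx : Continuous Fxx :=
    (((hFxC1.fderiv_right (m := 0) (by norm_num)).clm_apply contDiff_const)).continuous
  have cFwx : Continuous Fwx :=
    (((hFxC1.fderiv_right (m := 0) (by norm_num)).clm_apply contDiff_const)).continuous
  have cFxw : Continuous Fxw :=
    (((hFwC1.fderiv_right (m := 0) (by norm_num)).clm_apply contDiff_const)).continuous
  -- evaluation of fderiv at a fixed vector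
  have happ : ∀ (v p : ℝ × ℝ), HasFDerivAt (fun q => fderiv ℝ F q v)
      ((ContinuousLinearMap.apply ℝ ℝ v).comp (fderiv ℝ (fderiv ℝ F) p)) p :=
    fun v p => (ContinuousLinearMap.apply ℝ ℝ v).hasFDerivAt.comp p (hf'd p).hasFDerivAt
  have hsymm : ∀ (p v w : ℝ × ℝ), fderiv ℝ (fderiv ℝ F) p v w = fderiv ℝ (fderiv ℝ F) p w v :=
    fun p => second_derivative_symmetric (fun y => (hFd y).hasFDerivAt) ((hf'd p).hasFDerivAt)
  have hclairaut : ∀ p : ℝ × ℝ, Fwx p = Fxw p := by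
    intro p
    have e1 : fderiv ℝ Fx p = (ContinuousLinearMap.apply ℝ ℝ ((0:ℝ),(1:ℝ))).comp
        (fderiv ℝ (fderiv ℝ F) p) := (happ _ p).fderiv
    have e2 : fderiv ℝ Fw p = (ContinuousLinearMap.apply ℝ ℝ ((1:ℝ),(0:ℝ))).comp
        (fderiv ℝ (fderiv ℝ F) p) := (happ _ p).fderiv
    show fderiv ℝ Fx p (1,0) = fderiv ℝ Fw p (0,1)
    rw [e1, e2]
    simpa using hsymm p (1,0) (0,1)
  -- curve derivative helpers
  have keyX : ∀ (G : ℝ × ℝ → ℝ), Differentiable ℝ G → ∀ w x : ℝ,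
      HasDerivAt (fun t => G (w, t)) (fderiv ℝ G (w, x) (0,1)) x := by
    intro G hGd w x
    have h1 : HasDerivAt (fun t : ℝ => ((w, t) : ℝ × ℝ)) (0,1) x :=
      (hasDerivAt_const x w).prodMk (hasDerivAt_id x)
    exact (hGd (w,x)).hasFDerivAt.comp_hasDerivAt x h1
  have keyW : ∀ (G : ℝ × ℝ → ℝ), Differentiable ℝ G → ∀ w x : ℝ,
      HasDerivAt (fun t => G (t, x)) (fderiv ℝ G (w, x) (1,0)) w := by
    intro G hGd w x
    have h1 : HasDerivAt (fun t : ℝ => ((t, x) : ℝ × ℝ)) (1,0) w :=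
      (hasDerivAt_id w).prodMk (hasDerivAt_const w x)
    exact (hGd (w,x)).hasFDerivAt.comp_hasDerivAt w h1
  have hHx : ∀ w x : ℝ, HasDerivAt (H w) (Fx (w,x)) x := fun w x => keyX F hFd w x
  have dHx : ∀ w x : ℝ, deriv (H w) x = Fx (w,x) := fun w x => (hHx w x).deriv
  have hHw : ∀ w x : ℝ, HasDerivAt (fun t => H t x) (Fw (w,x)) w := fun w x => keyW F hFd w x
  have dHw : ∀ w x : ℝ, deriv (fun t => H t x) w = Fw (w,x) := fun w x => (hHw w x).deriv
  have derivH : ∀ w : ℝ, deriv (H w) = fun x => Fx (w,x) := fun w => funext (dHx w)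
  have hHxx : ∀ w x : ℝ, HasDerivAt (fun t => Fx (w,t)) (Fxx (w,x)) x := fun w x => keyX Fx hFxd w x
  have dHxx : ∀ w x : ℝ, deriv (deriv (H w)) x = Fxx (w,x) := by
    intro w x; rw [derivH w]; exact (hHxx w x).deriv
  have hFxW : ∀ w x : ℝ, HasDerivAt (fun t => Fx (t,x)) (Fwx (w,x)) w := fun w x => keyW Fx hFxd w x
  have hFwX : ∀ w x : ℝ, HasDerivAt (fun t => Fw (w,t)) (Fwx (w,x)) x := by
    intro w x
    rw [hclairaut (w,x)]
    exact keyX Fw hFwd w x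
  -- the ODE
  have ode : ∀ w ∈ I, ∀ x : ℝ, w * Fxx (w,x) = F (w,x) ^ (2*k+1) - F (w,x) := by
    intro w hw x
    have h := hode w hw x
    rw [dHxx w x] at h
    have : F (w,x) = H w x := rfl
    rw [this]; linarith
  -- periodicity
  have perF : ∀ w ∈ I, ∀ x : ℝ, F (w, x + L) = F (w, x) := fun w hw x => hper w hw x
  have perFx : ∀ w ∈ I, ∀ x : ℝ, Fx (w, x + L) = Fx (w, x) := by
    intro w hw x
    have h1 : (fun t => H w (t + L)) = H w := funext fun t => hper w hw t
    calc Fx (w, x + L) = deriv (H w) (x + L) := (dHx w _).symm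
      _ = deriv (fun t => H w (t + L)) x := (deriv_comp_add_const (H w) L x).symm
      _ = deriv (H w) x := by rw [h1]
      _ = Fx (w, x) := dHx w x
  have perFw : ∀ w ∈ I, ∀ x : ℝ, Fw (w, x + L) = Fw (w, x) := by
    intro w hw x
    have heq : (fun t => H t (x + L)) =ᶠ[nhds w] (fun t => H t x) :=
      Filter.eventuallyEq_of_mem (hIopen.mem_nhds hw) (fun t ht => hper t ht x)
    calc Fw (w, x + L) = deriv (fun t => H t (x + L)) w := (dHw w _).symm
      _ = deriv (fun t => H t x) w := heq.deriv_eq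
      _ = Fw (w, x) := dHw w x
  -- continuity of sections
  have csec : ∀ {G : ℝ × ℝ → ℝ}, Continuous G → ∀ w : ℝ, Continuous (fun x => G (w,x)) :=
    fun hG w => hG.comp (continuous_const.prodMk continuous_id)
  -- the three integral functionals
  set P : ℝ → ℝ := fun w => ∫ x in (0:ℝ)..L, (Fx (w,x))^2 with hPdef
  set Q : ℝ → ℝ := fun w => ∫ x in (0:ℝ)..L, (F (w,x))^2 with hQdef
  set R : ℝ → ℝ := fun w => ∫ x in (0:ℝ)..L, (F (w,x))^(2*k+2) with hRdef
  -- identity (A)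
  have hA : ∀ w ∈ I, w * P w - Q w + R w = 0 := by
    intro w hw
    have h1 : ∫ x in (0:ℝ)..L, F (w,x) * Fxx (w,x)
        = - ∫ x in (0:ℝ)..L, Fx (w,x) * Fx (w,x) := by
      refine ibp_periodic (hHx w) (hHxx w) (csec cFx w) (csec cFxx w) ?_ ?_
      · simpa using perF w hw 0
      · simpa using perFx w hw 0
    have e1 : Q w - R w = ∫ x in (0:ℝ)..L, ((F (w,x))^2 - (F (w,x))^(2*k+2)) := by
      rw [intervalIntegral.integral_sub (((csec cF w).fun_pow 2).intervalIntegrable _ _)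
        (((csec cF w).fun_pow (2*k+2)).intervalIntegrable _ _)]
    have e2 : (∫ x in (0:ℝ)..L, ((F (w,x))^2 - (F (w,x))^(2*k+2)))
        = ∫ x in (0:ℝ)..L, (-w) * (F (w,x) * Fxx (w,x)) := by
      refine intervalIntegral.integral_congr fun x _ => ?_
      have h := ode w hw x
      have : (-w) * (F (w,x) * Fxx (w,x)) = -(F (w,x) * (w * Fxx (w,x))) := by ring
      rw [this, h]; ring
    have e3 : (∫ x in (0:ℝ)..L, (-w) * (F (w,x) * Fxx (w,x)))
        = (-w) * ∫ x in (0:ℝ)..L, F (w,x) * Fxx (w,x) :=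
      intervalIntegral.integral_const_mul _ _
    have e4 : (∫ x in (0:ℝ)..L, Fx (w,x) * Fx (w,x)) = P w := by
      refine intervalIntegral.integral_congr fun x _ => ?_
      ring
    have : Q w - R w = w * P w := by rw [e1, e2, e3, h1, ← e4]; ring
    linarith
  -- derivatives of P, Q, R at ω
  have hP' : HasDerivAt P (∫ x in (0:ℝ)..L, 2 * Fx (ω,x) * Fwx (ω,x)) ω := by
    rw [hPdef]
    refine hasDerivAt_param_integral (G := fun w x => (Fx (w,x))^2)
      (G' := fun w x => 2 * Fx (w,x) * Fwx (w,x)) ?_ ?_ ?_ ω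
    · exact cFx.pow 2
    · exact (continuous_const.mul cFx).mul cFwx
    · intro w x; simpa using (hFxW w x).fun_pow 2
  have hQ' : HasDerivAt Q (∫ x in (0:ℝ)..L, 2 * F (ω,x) * Fw (ω,x)) ω := by
    rw [hQdef]
    refine hasDerivAt_param_integral (G := fun w x => (F (w,x))^2)
      (G' := fun w x => 2 * F (w,x) * Fw (w,x)) ?_ ?_ ?_ ω
    · exact cF.pow 2
    · exact (continuous_const.mul cF).mul cFw
    · intro w x; simpa using (hHw w x).fun_pow 2
  have hR' : HasDerivAt R (∫ x in (0:ℝ)..L,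
      ((2*k+2 : ℕ) : ℝ) * F (ω,x) ^ (2*k+1) * Fw (ω,x)) ω := by
    rw [hRdef]
    refine hasDerivAt_param_integral (G := fun w x => (F (w,x))^(2*k+2))
      (G' := fun w x => ((2*k+2 : ℕ) : ℝ) * F (w,x) ^ (2*k+1) * Fw (w,x)) ?_ ?_ ?_ ω
    · exact cF.pow (2*k+2)
    · exact (continuous_const.mul (cF.pow (2*k+1))).mul cFw
    · intro w x
      have := (hHw w x).pow (2*k+2)
      have hnum : 2*k+2-1 = 2*k+1 := by omega
      rw [hnum] at this
      exact this
  -- the derivative of the identity (A) at ω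
  have hABC : HasDerivAt (fun w => w * P w - Q w + R w)
      (1 * P ω + ω * (∫ x in (0:ℝ)..L, 2 * Fx (ω,x) * Fwx (ω,x))
        - (∫ x in (0:ℝ)..L, 2 * F (ω,x) * Fw (ω,x))
        + (∫ x in (0:ℝ)..L, ((2*k+2 : ℕ) : ℝ) * F (ω,x) ^ (2*k+1) * Fw (ω,x))) ω :=
    (((hasDerivAt_id ω).mul hP').sub hQ').add hR'
  have hzero : (fun w => w * P w - Q w + R w) =ᶠ[nhds ω] fun _ => (0:ℝ) :=
    Filter.eventuallyEq_of_mem (hIopen.mem_nhds hω) hA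
  have hval : 1 * P ω + ω * (∫ x in (0:ℝ)..L, 2 * Fx (ω,x) * Fwx (ω,x))
        - (∫ x in (0:ℝ)..L, 2 * F (ω,x) * Fw (ω,x))
        + (∫ x in (0:ℝ)..L, ((2*k+2 : ℕ) : ℝ) * F (ω,x) ^ (2*k+1) * Fw (ω,x)) = 0 := by
    have h0 : HasDerivAt (fun w => w * P w - Q w + R w) 0 ω :=
      (hasDerivAt_const ω (0:ℝ)).congr_of_eventuallyEq hzero
    exact hABC.unique h0
  -- second integration by parts
  have h2 : ∫ x in (0:ℝ)..L, Fx (ω,x) * Fwx (ω,x)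
      = - ∫ x in (0:ℝ)..L, Fxx (ω,x) * Fw (ω,x) := by
    refine ibp_periodic (hHxx ω) (hFwX ω) (csec cFxx ω) (csec cFwx ω) ?_ ?_
    · simpa using perFx ω hω 0
    · simpa using perFw ω hω 0
  -- use the ODE
  have h3 : ω * (∫ x in (0:ℝ)..L, Fxx (ω,x) * Fw (ω,x))
      = (∫ x in (0:ℝ)..L, F (ω,x) ^ (2*k+1) * Fw (ω,x))
        - ∫ x in (0:ℝ)..L, F (ω,x) * Fw (ω,x) := by
    rw [← intervalIntegral.integral_const_mul, ← intervalIntegral.integral_sub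
      (((csec cF ω).fun_pow (2*k+1) |>.fun_mul (csec cFw ω)).intervalIntegrable _ _)
      (((csec cF ω).fun_mul (csec cFw ω)).intervalIntegrable _ _)]
    refine intervalIntegral.integral_congr fun x _ => ?_
    have h := ode ω hω x
    calc ω * (Fxx (ω,x) * Fw (ω,x)) = (ω * Fxx (ω,x)) * Fw (ω,x) := by ring
      _ = (F (ω,x) ^ (2*k+1) - F (ω,x)) * Fw (ω,x) := by rw [h]
      _ = F (ω,x) ^ (2*k+1) * Fw (ω,x) - F (ω,x) * Fw (ω,x) := by ring
  -- abbreviations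
  set J : ℝ := ∫ x in (0:ℝ)..L, F (ω,x) ^ (2*k+1) * Fw (ω,x) with hJdef
  set M : ℝ := ∫ x in (0:ℝ)..L, F (ω,x) * Fw (ω,x) with hMdef
  have c2 : (∫ x in (0:ℝ)..L, 2 * Fx (ω,x) * Fwx (ω,x))
      = 2 * ∫ x in (0:ℝ)..L, Fx (ω,x) * Fwx (ω,x) := by
    rw [← intervalIntegral.integral_const_mul]
    exact intervalIntegral.integral_congr fun x _ => by ring
  have c3 : (∫ x in (0:ℝ)..L, 2 * F (ω,x) * Fw (ω,x)) = 2 * M := by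
    rw [hMdef, ← intervalIntegral.integral_const_mul]
    exact intervalIntegral.integral_congr fun x _ => by ring
  have c4 : (∫ x in (0:ℝ)..L, ((2*k+2 : ℕ) : ℝ) * F (ω,x) ^ (2*k+1) * Fw (ω,x))
      = ((2*k+2 : ℕ) : ℝ) * J := by
    rw [hJdef, ← intervalIntegral.integral_const_mul]
    exact intervalIntegral.integral_congr fun x _ => by ring
  -- final identity : P ω + 2k J = 0
  have key : P ω + 2 * (k:ℝ) * J = 0 := by
    have e : ω * (∫ x in (0:ℝ)..L, 2 * Fx (ω,x) * Fwx (ω,x)) = -2 * (J - M) := by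
      rw [c2, h2]
      have : ω * (2 * - ∫ x in (0:ℝ)..L, Fxx (ω,x) * Fw (ω,x))
          = -2 * (ω * ∫ x in (0:ℝ)..L, Fxx (ω,x) * Fw (ω,x)) := by ring
      rw [this, h3]
    rw [e, c3, c4] at hval
    have hcast : ((2*k+2 : ℕ) : ℝ) = 2*(k:ℝ)+2 := by push_cast; ring
    rw [hcast] at hval
    linarith
  -- conclude
  have goal1 : (∫ x in (0:ℝ)..L, (deriv (H ω) x) ^ 2) = P ω := by
    rw [derivH ω]
  have goal2 : deriv (fun w : ℝ => ∫ x in (0:ℝ)..L, H w x ^ (2*k+2)) ω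
      = ((2*k+2 : ℕ) : ℝ) * J := by
    rw [← c4]
    exact hR'.deriv
  rw [goal1, goal2]
  have hk1 : (k:ℝ) + 1 ≠ 0 := by positivity
  have hcast : ((2*k+2 : ℕ) : ℝ) = 2*(k:ℝ)+2 := by push_cast; ring
  rw [hcast]
  field_simp
  nlinarith [key]
end
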